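/- arXiv:2105.08232 — 2 statements merged into one kernel-verified Lean document; each statement's English description precedes it below -/
import Mathlib

section
/- (Lemma 1, necessary conditions for approximate second-order critical points.) Let κ ≥ 0 and let X̂ ∈ ℝ^{n×r} satisfy ‖∇f(X̂)‖_F ≤ κ·‖X̂‖₂ and ∇²f(X̂) ⪰ −κ I_{nr}. Then X̂ also satisfies: (i) ‖𝐗̂ᵀ𝐇e‖ ≤ (2‖𝐀ᵀw‖ + κ)·‖X̂‖₂, and (ii) the nr×nr symmetric matrix 2·I_r ⊗ mat_S(𝐇e) + 𝐗̂ᵀ𝐇𝐗̂ + (2‖𝐀ᵀw‖ + κ)·I_{nr} is positive semidefinite. -/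
open scoped BigOperators
open Matrix

noncomputable section

/-- Euclidean norm of a real vector indexed by `Fin k`. -/
def enormE {k : ℕ} (v : Fin k → ℝ) : ℝ := Real.sqrt (∑ i, (v i) ^ 2)

/-- Frobenius norm of a real matrix. -/
def fnorm {a b : ℕ} (M : Matrix (Fin a) (Fin b) ℝ) : ℝ :=
  Real.sqrt (∑ i, ∑ j, (M i j) ^ 2)

/-- Frobenius inner product of two real matrices. -/
def finner {a b : ℕ} (M N : Matrix (Fin a) (Fin b) ℝ) : ℝ := ∑ i, ∑ j, M i j * N i j

open Classical in
/-- The `i`-th largest eigenvalue (`0`-indexed, i.e. `eigval M 0` is the largest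
eigenvalue and `eigval M ⟨k-1,_⟩` the smallest) of a real symmetric matrix
(junk value `0` if the matrix is not symmetric). -/
def eigval {k : ℕ} (M : Matrix (Fin k) (Fin k) ℝ) (i : Fin k) : ℝ :=
  if h : M.IsHermitian then
    h.eigenvalues (Tuple.sort h.eigenvalues ⟨k - 1 - i.val, by have := i.isLt; omega⟩)
  else 0

/-- Spectral norm of a real matrix: `√(λ₁(XᵀX))`. -/
def specNorm {a b : ℕ} (X : Matrix (Fin a) (Fin b) ℝ) : ℝ :=
  if hb : 0 < b then Real.sqrt (eigval (Xᵀ * X) ⟨0, hb⟩) else 0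

/-- Smallest singular value `σ_b(X)` of `X ∈ ℝ^{a×b}`: the square root of the
smallest eigenvalue of `XᵀX`. -/
def sigmaMin {a b : ℕ} (X : Matrix (Fin a) (Fin b) ℝ) : ℝ :=
  if hb : 0 < b then Real.sqrt (eigval (Xᵀ * X) ⟨b - 1, by omega⟩) else 0

/-- Vectorization of a square matrix. -/
def vecSq {n : ℕ} (M : Matrix (Fin n) (Fin n) ℝ) : Fin (n * n) → ℝ :=
  fun k => M (finProdFinEquiv.symm k).1 (finProdFinEquiv.symm k).2

/-- Vectorization of an `n × r` matrix. -/
def vecR {n r : ℕ} (U : Matrix (Fin n) (Fin r) ℝ) : Fin (n * r) → ℝ :=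
  fun k => U (finProdFinEquiv.symm k).1 (finProdFinEquiv.symm k).2

/-- `mat_S(v) = (V + Vᵀ)/2` where `vec V = v`. -/
def matS {n : ℕ} (v : Fin (n * n) → ℝ) : Matrix (Fin n) (Fin n) ℝ :=
  (1 / 2 : ℝ) • ((Matrix.of fun i j => v (finProdFinEquiv (i, j))) +
    (Matrix.of fun i j => v (finProdFinEquiv (i, j)))ᵀ)

/-- The sensing operator `𝒜(M) = (⟨A₁,M⟩, …, ⟨A_m,M⟩)`. -/
def calA {n m : ℕ} (A : Fin m → Matrix (Fin n) (Fin n) ℝ)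
    (M : Matrix (Fin n) (Fin n) ℝ) : Fin m → ℝ := fun i => finner (A i) M

/-- Matrix representation `𝐀 ∈ ℝ^{m×n²}` of `𝒜`, satisfying `𝐀 ⬝ vec M = 𝒜(M)`. -/
def bigA {n m : ℕ} (A : Fin m → Matrix (Fin n) (Fin n) ℝ) :
    Matrix (Fin m) (Fin (n * n)) ℝ := Matrix.of fun i k => vecSq (A i) k

/-- `𝒜` satisfies the `(δ, g)`-RIP property. -/
def RIP {n m : ℕ} (A : Fin m → Matrix (Fin n) (Fin n) ℝ) (δ : ℝ) (g : ℕ) : Prop :=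
  ∀ M : Matrix (Fin n) (Fin n) ℝ, M.rank ≤ g →
    (1 - δ) * fnorm M ^ 2 ≤ enormE (calA A M) ^ 2 ∧
      enormE (calA A M) ^ 2 ≤ (1 + δ) * fnorm M ^ 2

/-- The matrix `𝐗̂ ∈ ℝ^{n² × nr}` satisfying `𝐗̂ ⬝ vec U = vec (X̂Uᵀ + UX̂ᵀ)`. -/
def bigX {n r : ℕ} (X : Matrix (Fin n) (Fin r) ℝ) :
    Matrix (Fin (n * n)) (Fin (n * r)) ℝ :=
  Matrix.of fun k l =>
    (if (finProdFinEquiv.symm k).2 = (finProdFinEquiv.symm l).1 then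
      X (finProdFinEquiv.symm k).1 (finProdFinEquiv.symm l).2 else 0) +
    (if (finProdFinEquiv.symm k).1 = (finProdFinEquiv.symm l).1 then
      X (finProdFinEquiv.symm k).2 (finProdFinEquiv.symm l).2 else 0)

/-- The Kronecker product `I_r ⊗ G`, realized as an operator on vectorized
`n × r` matrices (it sends `vec U` to `vec (G * U)`). -/
def kronIdR {n : ℕ} (r : ℕ) (G : Matrix (Fin n) (Fin n) ℝ) :
    Matrix (Fin (n * r)) (Fin (n * r)) ℝ :=
  Matrix.of fun k l =>
    if (finProdFinEquiv.symm k).2 = (finProdFinEquiv.symm l).2 then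
      G (finProdFinEquiv.symm k).1 (finProdFinEquiv.symm l).1 else 0

/-- Loewner order: `A ⪯ B` iff `B - A` is positive semidefinite. -/
def PSDle {k : ℕ} (A B : Matrix (Fin k) (Fin k) ℝ) : Prop := (B - A).PosSemidef

/-- The objective `f(X) = ½‖𝒜(XXᵀ) − b + w‖²` with `b = 𝒜(M*)`. -/
def fobj {n m r : ℕ} (A : Fin m → Matrix (Fin n) (Fin n) ℝ)
    (Mstar : Matrix (Fin n) (Fin n) ℝ) (w : Fin m → ℝ)
    (X : Matrix (Fin n) (Fin r) ℝ) : ℝ :=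
  (1 / 2) * enormE (fun i => calA A (X * Xᵀ) i - calA A Mstar i + w i) ^ 2

/-- View a point of Euclidean space as an `n × r` matrix. -/
def toMat {n r : ℕ} (x : EuclideanSpace ℝ (Fin n × Fin r)) : Matrix (Fin n) (Fin r) ℝ :=
  Matrix.of fun i j => x (i, j)

/-- View an `n × r` matrix as a point of Euclidean space (whose inner product is
the Frobenius inner product). -/
def vecE {n r : ℕ} (X : Matrix (Fin n) (Fin r) ℝ) : EuclideanSpace ℝ (Fin n × Fin r) :=
  WithLp.toLp 2 (fun p => X p.1 p.2)

/-- The objective as a function on Euclidean space. -/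
def fE {n m : ℕ} (r : ℕ) (A : Fin m → Matrix (Fin n) (Fin n) ℝ)
    (Mstar : Matrix (Fin n) (Fin n) ℝ) (w : Fin m → ℝ) :
    EuclideanSpace ℝ (Fin n × Fin r) → ℝ :=
  fun x => fobj A Mstar w (toMat x)

/-- Hessian quadratic form `D²f(X)[U, U]` (second Fréchet derivative). -/
def hessQF {n m : ℕ} (r : ℕ) (A : Fin m → Matrix (Fin n) (Fin n) ℝ)
    (Mstar : Matrix (Fin n) (Fin n) ℝ) (w : Fin m → ℝ)
    (X U : Matrix (Fin n) (Fin r) ℝ) : ℝ :=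
  iteratedFDeriv ℝ 2 (fE r A Mstar w) (vecE X) ![vecE U, vecE U]

/-- Gradient `∇f(X)` with respect to the Frobenius inner product, as a matrix. -/
def gradf {n m : ℕ} (r : ℕ) (A : Fin m → Matrix (Fin n) (Fin n) ℝ)
    (Mstar : Matrix (Fin n) (Fin n) ℝ) (w : Fin m → ℝ)
    (X : Matrix (Fin n) (Fin r) ℝ) : Matrix (Fin n) (Fin r) ℝ :=
  toMat (gradient (fE r A Mstar w) (vecE X))

namespace Stmt5
open Finset

lemma sum_finMul {a b : ℕ} {α : Type*} [AddCommMonoid α] (g : Fin (a * b) → α) :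
    ∑ k, g k = ∑ p : Fin a, ∑ q : Fin b, g (finProdFinEquiv (p, q)) := by
  rw [← Equiv.sum_comp finProdFinEquiv g, Fintype.sum_prod_type]

lemma enorm_nonneg {k : ℕ} (v : Fin k → ℝ) : 0 ≤ enormE v := Real.sqrt_nonneg _

lemma enorm_sq {k : ℕ} (v : Fin k → ℝ) : enormE v ^ 2 = ∑ i, v i ^ 2 :=
  Real.sq_sqrt (by positivity)

lemma fnorm_nonneg {a b : ℕ} (M : Matrix (Fin a) (Fin b) ℝ) : 0 ≤ fnorm M :=
  Real.sqrt_nonneg _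

lemma fnorm_sq {a b : ℕ} (M : Matrix (Fin a) (Fin b) ℝ) :
    fnorm M ^ 2 = ∑ i, ∑ j, M i j ^ 2 := Real.sq_sqrt (by positivity)


def mE {a b : ℕ} (M : Matrix (Fin a) (Fin b) ℝ) : EuclideanSpace ℝ (Fin a × Fin b) :=
  WithLp.toLp 2 (fun p => M p.1 p.2)

lemma fnorm_eq_norm {a b : ℕ} (M : Matrix (Fin a) (Fin b) ℝ) :
    fnorm M = ‖mE M‖ := by
  rw [EuclideanSpace.norm_eq, fnorm, Fintype.sum_prod_type]
  simp [mE, Real.norm_eq_abs, sq_abs]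

lemma mE_add {a b : ℕ} (M N : Matrix (Fin a) (Fin b) ℝ) : mE (M + N) = mE M + mE N := rfl

lemma fnorm_add_le {a b : ℕ} (M N : Matrix (Fin a) (Fin b) ℝ) :
    fnorm (M + N) ≤ fnorm M + fnorm N := by
  rw [fnorm_eq_norm, fnorm_eq_norm, fnorm_eq_norm, mE_add]
  exact norm_add_le _ _

lemma fnorm_transpose {a b : ℕ} (M : Matrix (Fin a) (Fin b) ℝ) :
    fnorm Mᵀ = fnorm M := by
  rw [fnorm, fnorm, Finset.sum_comm]
  rfl

lemma abs_dot_le {k : ℕ} (u v : Fin k → ℝ) :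
    |∑ i, u i * v i| ≤ enormE u * enormE v := by
  have h := Finset.sum_mul_sq_le_sq_mul_sq Finset.univ u v
  calc |∑ i, u i * v i| = Real.sqrt ((∑ i, u i * v i) ^ 2) := (Real.sqrt_sq_eq_abs _).symm
    _ ≤ Real.sqrt ((∑ i, u i ^ 2) * ∑ i, v i ^ 2) := Real.sqrt_le_sqrt h
    _ = enormE u * enormE v := by
        rw [Real.sqrt_mul (by positivity)]; rfl

lemma fnorm_mul_transpose_self_le {n r : ℕ} (U : Matrix (Fin n) (Fin r) ℝ) :
    fnorm (U * Uᵀ) ≤ fnorm U ^ 2 := by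
  have h1 : ∀ a b : Fin n, ((U * Uᵀ) a b) ^ 2 ≤ (∑ c, U a c ^ 2) * (∑ c, U b c ^ 2) := by
    intro a b
    have := Finset.sum_mul_sq_le_sq_mul_sq Finset.univ (fun c => U a c) (fun c => U b c)
    simpa [Matrix.mul_apply] using this
  have h2 : ∑ a, ∑ b, ((U * Uᵀ) a b) ^ 2 ≤ (∑ a, ∑ c, U a c ^ 2) ^ 2 := by
    calc ∑ a, ∑ b, ((U * Uᵀ) a b) ^ 2
        ≤ ∑ a, ∑ b, (∑ c, U a c ^ 2) * (∑ c, U b c ^ 2) := by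
          refine Finset.sum_le_sum fun a _ => Finset.sum_le_sum fun b _ => h1 a b
      _ = (∑ a, ∑ c, U a c ^ 2) ^ 2 := by
          rw [sq, Finset.sum_mul_sum]
  calc fnorm (U * Uᵀ) = Real.sqrt (∑ a, ∑ b, ((U * Uᵀ) a b) ^ 2) := rfl
    _ ≤ Real.sqrt ((∑ a, ∑ c, U a c ^ 2) ^ 2) := Real.sqrt_le_sqrt h2
    _ = ∑ a, ∑ c, U a c ^ 2 := Real.sqrt_sq (by positivity)
    _ = fnorm U ^ 2 := (fnorm_sq U).symm

section Spectral
variable {k : ℕ}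

lemma eigval_zero_max (hk : 0 < k) {M : Matrix (Fin k) (Fin k) ℝ}
    (hM : M.IsHermitian) (j : Fin k) : hM.eigenvalues j ≤ eigval M ⟨0, hk⟩ := by
  classical
  rw [eigval, dif_pos hM]
  set σ := Tuple.sort hM.eigenvalues with hσ
  have hmono := Tuple.monotone_sort hM.eigenvalues
  have hj : hM.eigenvalues j = (hM.eigenvalues ∘ σ) (σ.symm j) := by simp
  rw [hj]
  refine hmono ?_
  rw [Fin.le_def]
  have := (σ.symm j).isLt
  simp only []
  omega

lemma diag_quad (f z : Fin k → ℝ) :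
    z ⬝ᵥ (Matrix.diagonal f).mulVec z = ∑ i, f i * z i ^ 2 := by
  simp [dotProduct, Matrix.mulVec_diagonal, sq]
  exact Finset.sum_congr rfl fun i _ => by ring

lemma quadform_le_eigval (hk : 0 < k) {M : Matrix (Fin k) (Fin k) ℝ}
    (hM : M.IsHermitian) (v : Fin k → ℝ) :
    v ⬝ᵥ M.mulVec v ≤ eigval M ⟨0, hk⟩ * ∑ i, v i ^ 2 := by
  classical
  set U : Matrix (Fin k) (Fin k) ℝ := (hM.eigenvectorUnitary : Matrix (Fin k) (Fin k) ℝ) with hU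
  have hstar : star U = Uᵀ := by
    ext i j
    simp [Matrix.star_apply]
  have hUU : U * Uᵀ = 1 := by
    rw [← hstar]
    exact (Unitary.mem_iff.mp (hM.eigenvectorUnitary).2).2
  have hdiag : Matrix.diagonal (RCLike.ofReal ∘ hM.eigenvalues) = Matrix.diagonal hM.eigenvalues := by
    rfl
  have hrw : v ⬝ᵥ M.mulVec v = ∑ i, hM.eigenvalues i * (Matrix.vecMul v U) i ^ 2 := by
    calc v ⬝ᵥ M.mulVec v
        = v ⬝ᵥ (U.mulVec ((Matrix.diagonal hM.eigenvalues).mulVec (Uᵀ.mulVec v))) := by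
          conv_lhs => rw [hM.spectral_theorem, Unitary.conjStarAlgAut_apply]
          rw [hstar, hdiag, ← Matrix.mulVec_mulVec, ← Matrix.mulVec_mulVec]
      _ = (Matrix.vecMul v U) ⬝ᵥ ((Matrix.diagonal hM.eigenvalues).mulVec (Uᵀ.mulVec v)) :=
          Matrix.dotProduct_mulVec _ _ _
      _ = ∑ i, hM.eigenvalues i * (Matrix.vecMul v U) i ^ 2 := by
          rw [Matrix.mulVec_transpose]
          exact diag_quad _ _
  have hnorm : ∑ i, (Matrix.vecMul v U) i ^ 2 = ∑ i, v i ^ 2 := by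
    have h1 : ∑ i, (Matrix.vecMul v U) i ^ 2 = (Matrix.vecMul v U) ⬝ᵥ (Uᵀ.mulVec v) := by
      rw [Matrix.mulVec_transpose]
      simp [dotProduct, sq]
    rw [h1, ← Matrix.dotProduct_mulVec, Matrix.mulVec_mulVec, hUU, Matrix.one_mulVec]
    simp [dotProduct, sq]
  rw [hrw, ← hnorm, Finset.mul_sum]
  refine Finset.sum_le_sum fun i _ => ?_
  have := eigval_zero_max hk hM i
  nlinarith [sq_nonneg ((Matrix.vecMul v U) i)]

end Spectral

section SpecNorm
open Finset
variable {a n r : ℕ}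

lemma specNorm_nonneg (X : Matrix (Fin n) (Fin r) ℝ) : 0 ≤ specNorm X := by
  unfold specNorm
  split
  · exact Real.sqrt_nonneg _
  · exact le_refl 0

lemma transpose_mul_self_posSemidef (X : Matrix (Fin n) (Fin r) ℝ) :
    (Xᵀ * X).PosSemidef := by
  have h := Matrix.posSemidef_conjTranspose_mul_self X
  have : Xᴴ = Xᵀ := by ext i j; simp [Matrix.conjTranspose_apply]
  rwa [this] at h

lemma specNorm_sq (hr : 0 < r) (X : Matrix (Fin n) (Fin r) ℝ) :
    specNorm X ^ 2 = eigval (Xᵀ * X) ⟨0, hr⟩ := by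
  have hpsd := transpose_mul_self_posSemidef X
  have hnn : 0 ≤ eigval (Xᵀ * X) ⟨0, hr⟩ := by
    classical
    rw [eigval, dif_pos hpsd.1]
    exact hpsd.eigenvalues_nonneg _
  rw [specNorm, dif_pos hr]
  exact Real.sq_sqrt hnn

lemma vecMul_sq_le (hr : 0 < r) (X : Matrix (Fin n) (Fin r) ℝ) (u : Fin n → ℝ) :
    ∑ j, (Matrix.vecMul u X) j ^ 2 ≤ specNorm X ^ 2 * ∑ i, u i ^ 2 := by
  classical
  set v : Fin r → ℝ := Matrix.vecMul u X with hv
  set s : ℝ := ∑ j, v j ^ 2 with hs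
  have hs0 : 0 ≤ s := by positivity
  set av : Fin n → ℝ := X.mulVec v with hav
  have hkey : s = u ⬝ᵥ av := by
    rw [hav, Matrix.dotProduct_mulVec, ← hv, hs]
    simp [dotProduct, sq]
  have hCS : u ⬝ᵥ av ≤ enormE u * enormE av := by
    have := abs_dot_le u av
    calc u ⬝ᵥ av = ∑ i, u i * av i := rfl
      _ ≤ |∑ i, u i * av i| := le_abs_self _
      _ ≤ enormE u * enormE av := this
  have haa : enormE av ^ 2 = v ⬝ᵥ (Xᵀ * X).mulVec v := by
    rw [enorm_sq, ← Matrix.mulVec_mulVec, Matrix.dotProduct_mulVec,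
      Matrix.vecMul_transpose, ← hav]
    simp [dotProduct, sq]
  have hq : v ⬝ᵥ (Xᵀ * X).mulVec v ≤ specNorm X ^ 2 * s := by
    rw [specNorm_sq hr]
    exact quadform_le_eigval hr (transpose_mul_self_posSemidef X).1 v
  -- s ≤ enormE u * enormE av, (enormE av)^2 ≤ spec^2 * s
  have h1 : s ≤ enormE u * enormE av := hkey ▸ hCS
  have h2 : enormE av ^ 2 ≤ specNorm X ^ 2 * s := haa ▸ hq
  have hu : enormE u ^ 2 = ∑ i, u i ^ 2 := enorm_sq u
  have hu0 : 0 ≤ enormE u := enorm_nonneg u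
  have hav0 : 0 ≤ enormE av := enorm_nonneg av
  rcases eq_or_lt_of_le hs0 with h | h
  · rw [← h]
    positivity
  · have hsq : s ^ 2 ≤ (specNorm X ^ 2 * ∑ i, u i ^ 2) * s := by
      calc s ^ 2 ≤ (enormE u * enormE av) ^ 2 := by nlinarith
        _ = enormE u ^ 2 * enormE av ^ 2 := by ring
        _ ≤ enormE u ^ 2 * (specNorm X ^ 2 * s) := by nlinarith [sq_nonneg (enormE u)]
        _ = (specNorm X ^ 2 * ∑ i, u i ^ 2) * s := by rw [hu]; ring
    have := le_of_mul_le_mul_right (by nlinarith : s * s ≤ (specNorm X ^ 2 * ∑ i, u i ^ 2) * s) h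
    exact this

lemma fnorm_mul_specNorm_le (hr : 0 < r) (W : Matrix (Fin a) (Fin n) ℝ)
    (X : Matrix (Fin n) (Fin r) ℝ) :
    fnorm (W * X) ≤ fnorm W * specNorm X := by
  have hbound : ∑ i, ∑ j, ((W * X) i j) ^ 2 ≤ specNorm X ^ 2 * ∑ i, ∑ b, W i b ^ 2 := by
    rw [Finset.mul_sum]
    refine Finset.sum_le_sum fun i _ => ?_
    have h := vecMul_sq_le hr X (W i)
    calc ∑ j, ((W * X) i j) ^ 2 = ∑ j, (Matrix.vecMul (W i) X) j ^ 2 := by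
          refine Finset.sum_congr rfl fun j _ => ?_
          simp [Matrix.mul_apply, Matrix.vecMul]
          rfl
      _ ≤ specNorm X ^ 2 * ∑ b, W i b ^ 2 := h
  calc fnorm (W * X) = Real.sqrt (∑ i, ∑ j, ((W * X) i j) ^ 2) := rfl
    _ ≤ Real.sqrt (specNorm X ^ 2 * ∑ i, ∑ b, W i b ^ 2) := Real.sqrt_le_sqrt hbound
    _ = specNorm X * Real.sqrt (∑ i, ∑ b, W i b ^ 2) := by
        rw [Real.sqrt_mul (by positivity), Real.sqrt_sq (specNorm_nonneg X)]
    _ = fnorm W * specNorm X := by rw [fnorm]; ring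

end SpecNorm

section Calculus
open Finset

variable {n m r : ℕ} (A : Fin m → Matrix (Fin n) (Fin n) ℝ)
  (Mstar : Matrix (Fin n) (Fin n) ℝ) (w : Fin m → ℝ)

/-- Shorthand for the ambient Euclidean space. -/
abbrev Esp (n r : ℕ) := EuclideanSpace ℝ (Fin n × Fin r)

def qf (i : Fin m) (x : Esp n r) : ℝ :=
  (∑ a, ∑ b, A i a b * ∑ c, x (a, c) * x (b, c)) + (w i - finner (A i) Mstar)

def Dq (i : Fin m) (x : Esp n r) : Esp n r →L[ℝ] ℝ :=
  ∑ a, ∑ b, A i a b • ∑ c,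
    (x (a, c) • EuclideanSpace.proj (b, c) + x (b, c) • EuclideanSpace.proj (a, c))

lemma hasFDeriv_coord (p : Fin n × Fin r) (x : Esp n r) :
    HasFDerivAt (fun y : Esp n r => y p)
      (EuclideanSpace.proj p : EuclideanSpace ℝ (Fin n × Fin r) →L[ℝ] ℝ) x :=
  (EuclideanSpace.proj p : EuclideanSpace ℝ (Fin n × Fin r) →L[ℝ] ℝ).hasFDerivAt

lemma hasFDeriv_qf (i : Fin m) (x : Esp n r) :
    HasFDerivAt (qf A Mstar w i) (Dq A i x) x := by
  unfold qf Dq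
  refine HasFDerivAt.add_const _ ?_
  refine HasFDerivAt.fun_sum fun a _ => ?_
  refine HasFDerivAt.fun_sum fun b _ => ?_
  exact (HasFDerivAt.fun_sum fun c _ =>
    (hasFDeriv_coord (a, c) x).mul (hasFDeriv_coord (b, c) x)).const_mul (A i a b)

lemma fE_eq : fE r A Mstar w = fun x => (1/2 : ℝ) * ∑ i, qf A Mstar w i x * qf A Mstar w i x := by
  funext x
  simp only [fE, fobj]
  rw [enorm_sq]
  congr 1
  refine Finset.sum_congr rfl fun i _ => ?_
  have hc : calA A (toMat x * (toMat x)ᵀ) i = ∑ a, ∑ b, A i a b * ∑ c, x (a, c) * x (b, c) := by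
    simp [calA, finner, Matrix.mul_apply, toMat, Matrix.transpose_apply]
  have hcm : calA A Mstar i = finner (A i) Mstar := rfl
  rw [hc, hcm, qf]
  ring

def D1 (x : Esp n r) : Esp n r →L[ℝ] ℝ :=
  (1/2 : ℝ) • ∑ i, (qf A Mstar w i x • Dq A i x + qf A Mstar w i x • Dq A i x)

lemma hasFDeriv_fE (x : Esp n r) :
    HasFDerivAt (fE r A Mstar w) (D1 A Mstar w x) x := by
  rw [fE_eq]
  exact (HasFDerivAt.fun_sum fun i _ =>
    (hasFDeriv_qf A Mstar w i x).mul (hasFDeriv_qf A Mstar w i x)).const_mul _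

def Phi (i : Fin m) : Esp n r →L[ℝ] Esp n r →L[ℝ] ℝ :=
  ∑ a, ∑ b, A i a b • ∑ c,
    ((EuclideanSpace.proj ((a, c) : Fin n × Fin r)).smulRight (EuclideanSpace.proj (b, c)) +
     (EuclideanSpace.proj ((b, c) : Fin n × Fin r)).smulRight (EuclideanSpace.proj (a, c)))

lemma Phi_apply (i : Fin m) (y : Esp n r) : Phi A i y = Dq A i y := by
  unfold Phi Dq
  ext u
  simp [ContinuousLinearMap.sum_apply, ContinuousLinearMap.smul_apply,
    ContinuousLinearMap.add_apply, ContinuousLinearMap.smulRight_apply]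

lemma hasFDeriv_Dq (i : Fin m) (x : Esp n r) :
    HasFDerivAt (fun y : Esp n r => Dq A i y) (Phi (r := r) A i) x := by
  have h : (fun y : Esp n r => Dq A i y) = ⇑(Phi (r := r) A i) :=
    funext fun y => (Phi_apply A i y).symm
  rw [h]
  exact (Phi (r := r) A i).hasFDerivAt

def D2 (x : Esp n r) : Esp n r →L[ℝ] Esp n r →L[ℝ] ℝ :=
  (1/2 : ℝ) • ∑ i,
    ((qf A Mstar w i x • Phi A i + (Dq A i x).smulRight (Dq A i x)) +
     (qf A Mstar w i x • Phi A i + (Dq A i x).smulRight (Dq A i x)))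

lemma hasFDeriv_D1 (x : Esp n r) :
    HasFDerivAt (D1 A Mstar w) (D2 A Mstar w x) x := by
  have hD1 : D1 A Mstar w = fun y : Esp n r =>
      (1/2 : ℝ) • ∑ i, (qf A Mstar w i y • Dq A i y + qf A Mstar w i y • Dq A i y) := rfl
  rw [hD1]
  unfold D2
  refine HasFDerivAt.fun_const_smul (R := ℝ) (F := Esp n r →L[ℝ] ℝ) ?_ (1/2 : ℝ)
  refine HasFDerivAt.fun_sum fun i _ => ?_
  exact ((hasFDeriv_qf A Mstar w i x).smul (hasFDeriv_Dq A i x)).add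
    ((hasFDeriv_qf A Mstar w i x).smul (hasFDeriv_Dq A i x))

lemma hess_eval (X U : Matrix (Fin n) (Fin r) ℝ) :
    hessQF r A Mstar w X U = D2 A Mstar w (vecE X) (vecE U) (vecE U) := by
  rw [hessQF, iteratedFDeriv_two_apply]
  have h2 : fderiv ℝ (fE r A Mstar w) = D1 A Mstar w :=
    funext fun y => (hasFDeriv_fE A Mstar w y).fderiv
  rw [h2, (hasFDeriv_D1 A Mstar w (vecE X)).fderiv]
  simp

def rho (X : Matrix (Fin n) (Fin r) ℝ) (i : Fin m) : ℝ :=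
  finner (A i) (X * Xᵀ) - finner (A i) Mstar + w i

lemma qf_vecE (i : Fin m) (X : Matrix (Fin n) (Fin r) ℝ) :
    qf A Mstar w i (vecE X) = rho A Mstar w X i := by
  unfold qf rho
  have h : finner (A i) (X * Xᵀ) = ∑ a, ∑ b, A i a b * ∑ c, vecE X (a, c) * vecE X (b, c) := by
    simp [finner, Matrix.mul_apply, vecE, Matrix.transpose_apply]
  rw [h]
  ring

lemma Dq_vecE (i : Fin m) (X : Matrix (Fin n) (Fin r) ℝ) (u : Esp n r) :
    Dq A i (vecE X) u = ∑ a, ∑ b, A i a b * ∑ c, (X a c * u (b, c) + X b c * u (a, c)) := by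
  unfold Dq
  simp [ContinuousLinearMap.sum_apply, ContinuousLinearMap.smul_apply,
    ContinuousLinearMap.add_apply, vecE, Finset.mul_sum, mul_add]

lemma Dq_vecE' (i : Fin m) (X U : Matrix (Fin n) (Fin r) ℝ) :
    Dq A i (vecE X) (vecE U) = finner (A i) (X * Uᵀ + U * Xᵀ) := by
  rw [Dq_vecE]
  simp only [finner, Matrix.add_apply, Matrix.mul_apply, Matrix.transpose_apply]
  refine Finset.sum_congr rfl fun a _ => Finset.sum_congr rfl fun b _ => ?_
  rw [← Finset.sum_add_distrib]
  congr 1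
  refine Finset.sum_congr rfl fun c _ => ?_
  simp [vecE]
  ring

lemma Phi_eval (i : Fin m) (U : Matrix (Fin n) (Fin r) ℝ) :
    Phi A i (vecE U) (vecE U) = 2 * finner (A i) (U * Uᵀ) := by
  rw [Phi_apply, Dq_vecE]
  simp only [vecE, finner, Matrix.mul_apply, Matrix.transpose_apply]
  rw [Finset.mul_sum]
  refine Finset.sum_congr rfl fun a _ => ?_
  rw [Finset.mul_sum]
  refine Finset.sum_congr rfl fun b _ => ?_
  have h : (∑ c, (U a c * U b c + U b c * U a c) : ℝ) = 2 * ∑ c, U a c * U b c := by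
    rw [Finset.mul_sum]
    exact Finset.sum_congr rfl fun c _ => by ring
  rw [h]
  ring

lemma hess_formula (X U : Matrix (Fin n) (Fin r) ℝ) :
    hessQF r A Mstar w X U =
      (∑ i, finner (A i) (X * Uᵀ + U * Xᵀ) ^ 2) +
        2 * ∑ i, rho A Mstar w X i * finner (A i) (U * Uᵀ) := by
  rw [hess_eval]
  unfold D2
  simp only [ContinuousLinearMap.smul_apply, ContinuousLinearMap.sum_apply,
    ContinuousLinearMap.add_apply, ContinuousLinearMap.smulRight_apply, smul_eq_mul]
  rw [Finset.mul_sum, Finset.mul_sum, ← Finset.sum_add_distrib]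
  refine Finset.sum_congr rfl fun i _ => ?_
  rw [qf_vecE, Dq_vecE', Phi_eval]
  ring

/-- The gradient of `fE` in matrix form. -/
def gradMat (X : Matrix (Fin n) (Fin r) ℝ) : Matrix (Fin n) (Fin r) ℝ :=
  ∑ i, rho A Mstar w X i • ((A i + (A i)ᵀ) * X)

lemma helper1 (B : Matrix (Fin n) (Fin n) ℝ) (X : Matrix (Fin n) (Fin r) ℝ) (u : Esp n r) :
    ∑ a, ∑ c, ((B + Bᵀ) * X) a c * u (a, c)
      = ∑ a, ∑ b, B a b * ∑ c, (X a c * u (b, c) + X b c * u (a, c)) := by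
  have lhs_eq : ∑ a, ∑ c, ((B + Bᵀ) * X) a c * u (a, c)
      = (∑ a, ∑ c, ∑ b, B a b * X b c * u (a, c))
        + (∑ a, ∑ c, ∑ b, B b a * X b c * u (a, c)) := by
    rw [← Finset.sum_add_distrib]
    refine Finset.sum_congr rfl fun a _ => ?_
    rw [← Finset.sum_add_distrib]
    refine Finset.sum_congr rfl fun c _ => ?_
    simp only [Matrix.mul_apply, Matrix.add_apply, Matrix.transpose_apply]
    rw [Finset.sum_mul, ← Finset.sum_add_distrib]
    refine Finset.sum_congr rfl fun b _ => ?_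
    ring
  have rhs_eq : ∑ a, ∑ b, B a b * ∑ c, (X a c * u (b, c) + X b c * u (a, c))
      = (∑ a, ∑ b, ∑ c, B a b * X a c * u (b, c))
        + (∑ a, ∑ b, ∑ c, B a b * X b c * u (a, c)) := by
    rw [← Finset.sum_add_distrib]
    refine Finset.sum_congr rfl fun a _ => ?_
    rw [← Finset.sum_add_distrib]
    refine Finset.sum_congr rfl fun b _ => ?_
    rw [Finset.mul_sum, ← Finset.sum_add_distrib]
    refine Finset.sum_congr rfl fun c _ => ?_
    ring
  rw [lhs_eq, rhs_eq]
  have h1 : (∑ a, ∑ c, ∑ b, B a b * X b c * u (a, c))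
      = ∑ a, ∑ b, ∑ c, B a b * X b c * u (a, c) :=
    Finset.sum_congr rfl fun a _ => Finset.sum_comm
  have h2 : (∑ a, ∑ c, ∑ b, B b a * X b c * u (a, c) : ℝ)
      = ∑ a, ∑ b, ∑ c, B a b * X a c * u (b, c) := by
    have step1 : (∑ a, ∑ c, ∑ b, B b a * X b c * u (a, c) : ℝ)
        = ∑ a, ∑ b, ∑ c, B b a * X b c * u (a, c) :=
      Finset.sum_congr rfl fun a _ => Finset.sum_comm
    rw [step1]
    exact Finset.sum_comm
  rw [h1, h2]
  ring

lemma gradient_eq (X : Matrix (Fin n) (Fin r) ℝ) :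
    gradient (fE r A Mstar w) (vecE X) = vecE (gradMat A Mstar w X) := by
  have hg : HasGradientAt (fE r A Mstar w) (vecE (gradMat A Mstar w X)) (vecE X) := by
    rw [hasGradientAt_iff_hasFDerivAt]
    have heq : (InnerProductSpace.toDual ℝ (Esp n r)) (vecE (gradMat A Mstar w X))
        = D1 A Mstar w (vecE X) := by
      ext u
      rw [InnerProductSpace.toDual_apply_apply]
      rw [PiLp.inner_apply]
      simp only [RCLike.inner_apply, starRingEnd_apply, star_trivial]
      rw [Fintype.sum_prod_type]
      have hl : ∑ a, ∑ c, vecE (gradMat A Mstar w X) (a, c) * u (a, c)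
          = ∑ i, rho A Mstar w X i *
              (∑ a, ∑ b, A i a b * ∑ c, (X a c * u (b, c) + X b c * u (a, c))) := by
        have : ∀ a c, vecE (gradMat A Mstar w X) (a, c)
            = ∑ i, rho A Mstar w X i * ((A i + (A i)ᵀ) * X) a c := by
          intro a c
          simp [vecE, gradMat, Matrix.sum_apply]
        calc ∑ a, ∑ c, vecE (gradMat A Mstar w X) (a, c) * u (a, c)
            = ∑ a, ∑ c, ∑ i, rho A Mstar w X i * (((A i + (A i)ᵀ) * X) a c * u (a, c)) := by
              refine Finset.sum_congr rfl fun a _ => Finset.sum_congr rfl fun c _ => ?_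
              rw [this a c, Finset.sum_mul]
              exact Finset.sum_congr rfl fun i _ => by ring
          _ = ∑ i, rho A Mstar w X i * ∑ a, ∑ c, ((A i + (A i)ᵀ) * X) a c * u (a, c) := by
              have step1 : (∑ a, ∑ c, ∑ i, rho A Mstar w X i * (((A i + (A i)ᵀ) * X) a c * u (a, c)) : ℝ)
                  = ∑ a, ∑ i, ∑ c, rho A Mstar w X i * (((A i + (A i)ᵀ) * X) a c * u (a, c)) :=
                Finset.sum_congr rfl fun a _ => Finset.sum_comm
              rw [step1, Finset.sum_comm]
              refine Finset.sum_congr rfl fun i _ => ?_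
              rw [Finset.mul_sum]
              refine Finset.sum_congr rfl fun a _ => ?_
              rw [Finset.mul_sum]
          _ = ∑ i, rho A Mstar w X i *
              (∑ a, ∑ b, A i a b * ∑ c, (X a c * u (b, c) + X b c * u (a, c))) :=
            Finset.sum_congr rfl fun i _ => by rw [helper1]
      conv_lhs => enter [2, a, 2, c]; rw [mul_comm]
      rw [hl]
      simp only [D1, ContinuousLinearMap.smul_apply, ContinuousLinearMap.sum_apply,
        ContinuousLinearMap.add_apply, smul_eq_mul]
      rw [Finset.mul_sum]
      refine Finset.sum_congr rfl fun i _ => ?_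
      rw [qf_vecE, Dq_vecE]
      ring
    rw [heq]
    exact hasFDeriv_fE A Mstar w (vecE X)
  exact hg.gradient

lemma toMat_vecE (X : Matrix (Fin n) (Fin r) ℝ) : toMat (vecE X) = X := rfl

lemma gradf_eq (X : Matrix (Fin n) (Fin r) ℝ) :
    gradf r A Mstar w X = gradMat A Mstar w X := by
  rw [gradf, gradient_eq, toMat_vecE]

end Calculus

section Ident
open Finset
variable {n m r : ℕ}

def matN (v : Fin (n * n) → ℝ) : Matrix (Fin n) (Fin n) ℝ :=
  Matrix.of fun a b => v (finProdFinEquiv (a, b))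

def matR (y : Fin (n * r) → ℝ) : Matrix (Fin n) (Fin r) ℝ :=
  Matrix.of fun a c => y (finProdFinEquiv (a, c))

@[simp] lemma vecSq_apply (M : Matrix (Fin n) (Fin n) ℝ) (i j : Fin n) :
    vecSq M (finProdFinEquiv (i, j)) = M i j := by simp [vecSq]

@[simp] lemma vecR_apply (U : Matrix (Fin n) (Fin r) ℝ) (i : Fin n) (j : Fin r) :
    vecR U (finProdFinEquiv (i, j)) = U i j := by simp [vecR]

lemma matN_vecSq (M : Matrix (Fin n) (Fin n) ℝ) : matN (vecSq M) = M := by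
  ext a b; simp [matN]

lemma vecR_matR (y : Fin (n * r) → ℝ) : vecR (matR y) = y := by
  funext k
  conv_rhs => rw [← finProdFinEquiv.apply_symm_apply k]
  simp [vecR, matR]
lemma enorm_vecSq (M : Matrix (Fin n) (Fin n) ℝ) : enormE (vecSq M) = fnorm M := by
  rw [enormE, fnorm, sum_finMul]
  simp

lemma enorm_vecR (U : Matrix (Fin n) (Fin r) ℝ) : enormE (vecR U) = fnorm U := by
  rw [enormE, fnorm, sum_finMul]
  simp

lemma dotR (U V : Matrix (Fin n) (Fin r) ℝ) : vecR U ⬝ᵥ vecR V = finner U V := by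
  rw [dotProduct, finner, sum_finMul]
  simp

lemma dotSq (M N : Matrix (Fin n) (Fin n) ℝ) : vecSq M ⬝ᵥ vecSq N = finner M N := by
  rw [dotProduct, finner, sum_finMul]
  simp

lemma sq_sum_vecR (y : Fin (n * r) → ℝ) : ∑ k, y k ^ 2 = fnorm (matR y) ^ 2 := by
  rw [fnorm_sq, sum_finMul]
  simp [matR]

lemma bigA_mulVec (A : Fin m → Matrix (Fin n) (Fin n) ℝ) (M : Matrix (Fin n) (Fin n) ℝ) :
    (bigA A).mulVec (vecSq M) = calA A M := by
  funext i
  rw [Matrix.mulVec, dotProduct, sum_finMul]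
  simp [bigA, calA, finner]

lemma bigAT_mulVec (A : Fin m → Matrix (Fin n) (Fin n) ℝ) (v : Fin m → ℝ) :
    (bigA A)ᵀ.mulVec v = vecSq (∑ i, v i • A i) := by
  funext k
  simp [Matrix.mulVec, dotProduct, bigA, vecSq, Matrix.sum_apply, mul_comm]

lemma bigX_mulVec (X : Matrix (Fin n) (Fin r) ℝ) (U : Matrix (Fin n) (Fin r) ℝ) :
    (bigX X).mulVec (vecR U) = vecSq (X * Uᵀ + U * Xᵀ) := by
  funext k
  obtain ⟨⟨a0, b0⟩, rfl⟩ := finProdFinEquiv.surjective k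
  rw [Matrix.mulVec, dotProduct, sum_finMul]
  simp only [bigX, Matrix.of_apply, Equiv.symm_apply_apply, vecR_apply, vecSq_apply,
    Matrix.add_apply, Matrix.mul_apply, Matrix.transpose_apply, add_mul, ite_mul, zero_mul,
    Finset.sum_add_distrib]
  congr 1
  · rw [Finset.sum_comm]
    simp [Finset.sum_ite_eq, mul_comm]
  · rw [Finset.sum_comm]
    simp [Finset.sum_ite_eq, mul_comm]
lemma bigXT_mulVec (X : Matrix (Fin n) (Fin r) ℝ) (v : Fin (n * n) → ℝ) :
    (bigX X)ᵀ.mulVec v = vecR ((matN v + (matN v)ᵀ) * X) := by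
  funext l
  obtain ⟨⟨a0, b0⟩, rfl⟩ := finProdFinEquiv.surjective l
  rw [Matrix.mulVec, dotProduct, sum_finMul]
  simp only [Matrix.transpose_apply, bigX, Matrix.of_apply, Equiv.symm_apply_apply, vecR_apply,
    Matrix.add_apply, Matrix.mul_apply, matN, add_mul, mul_add, ite_mul, zero_mul, mul_ite,
    mul_zero, Finset.sum_add_distrib]
  rw [add_comm]
  congr 1
  · rw [Finset.sum_comm]
    simp [Finset.sum_ite_eq', mul_comm]
  · simp [Finset.sum_ite_eq', mul_comm]
lemma kron_mulVec (G : Matrix (Fin n) (Fin n) ℝ) (U : Matrix (Fin n) (Fin r) ℝ) :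
    (kronIdR r G).mulVec (vecR U) = vecR (G * U) := by
  funext k
  obtain ⟨⟨a0, b0⟩, rfl⟩ := finProdFinEquiv.surjective k
  rw [Matrix.mulVec, dotProduct, sum_finMul]
  simp only [kronIdR, Matrix.of_apply, Equiv.symm_apply_apply, vecR_apply, Matrix.mul_apply,
    ite_mul, zero_mul]
  simp [Finset.sum_ite_eq, Finset.sum_ite_eq']
lemma finner_sub (P Q N : Matrix (Fin n) (Fin n) ℝ) :
    finner N (P - Q) = finner N P - finner N Q := by
  simp [finner, Matrix.sub_apply, mul_sub, Finset.sum_sub_distrib]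

lemma sum_rot {α β γ : Type*} [Fintype α] [Fintype β] [Fintype γ] (f : α → β → γ → ℝ) :
    ∑ a, ∑ b, ∑ i, f a b i = ∑ i, ∑ a, ∑ b, f a b i := by
  calc ∑ a, ∑ b, ∑ i, f a b i = ∑ a, ∑ i, ∑ b, f a b i :=
        Finset.sum_congr rfl fun a _ => Finset.sum_comm
    _ = ∑ i, ∑ a, ∑ b, f a b i := Finset.sum_comm

lemma mulT_symm (U : Matrix (Fin n) (Fin r) ℝ) (a b : Fin n) :
    (U * Uᵀ) a b = (U * Uᵀ) b a := by
  simp only [Matrix.mul_apply, Matrix.transpose_apply]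
  exact Finset.sum_congr rfl fun c _ => mul_comm _ _

lemma finner_sum_smul (A : Fin m → Matrix (Fin n) (Fin n) ℝ) (c : Fin m → ℝ)
    (N : Matrix (Fin n) (Fin n) ℝ) :
    finner (∑ i, c i • A i) N = ∑ i, c i * finner (A i) N := by
  have h1 : finner (∑ i, c i • A i) N = ∑ a, ∑ b, ∑ i, c i * A i a b * N a b := by
    simp only [finner, Matrix.sum_apply, Matrix.smul_apply, smul_eq_mul, Finset.sum_mul]
  rw [h1, sum_rot]
  refine Finset.sum_congr rfl fun i _ => ?_
  rw [finner, Finset.mul_sum]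
  refine Finset.sum_congr rfl fun a _ => ?_
  rw [Finset.mul_sum]
  exact Finset.sum_congr rfl fun b _ => by ring
lemma abs_finner_le {a b : ℕ} (M N : Matrix (Fin a) (Fin b) ℝ) :
    |finner M N| ≤ fnorm M * fnorm N := by
  have h := Finset.sum_mul_sq_le_sq_mul_sq Finset.univ
    (fun p : Fin a × Fin b => M p.1 p.2) (fun p : Fin a × Fin b => N p.1 p.2)
  have hf : finner M N = ∑ p : Fin a × Fin b, M p.1 p.2 * N p.1 p.2 := by
    rw [finner, Fintype.sum_prod_type]
  have hM : fnorm M ^ 2 = ∑ p : Fin a × Fin b, M p.1 p.2 ^ 2 := by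
    rw [fnorm_sq, Fintype.sum_prod_type]
  have hN : fnorm N ^ 2 = ∑ p : Fin a × Fin b, N p.1 p.2 ^ 2 := by
    rw [fnorm_sq, Fintype.sum_prod_type]
  calc |finner M N| = Real.sqrt (finner M N ^ 2) := (Real.sqrt_sq_eq_abs _).symm
    _ ≤ Real.sqrt ((fnorm M ^ 2) * (fnorm N ^ 2)) := by
        refine Real.sqrt_le_sqrt ?_
        rw [hf, hM, hN]
        exact h
    _ = fnorm M * fnorm N := by
        rw [Real.sqrt_mul (by positivity), Real.sqrt_sq (fnorm_nonneg M),
          Real.sqrt_sq (fnorm_nonneg N)]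

lemma fnorm_neg {a b : ℕ} (M : Matrix (Fin a) (Fin b) ℝ) : fnorm (-M) = fnorm M := by
  rw [fnorm, fnorm]
  congr 1
  refine Finset.sum_congr rfl fun i _ => Finset.sum_congr rfl fun j _ => ?_
  simp

lemma fnorm_sub_le {a b : ℕ} (M N : Matrix (Fin a) (Fin b) ℝ) :
    fnorm (M - N) ≤ fnorm M + fnorm N := by
  have := fnorm_add_le M (-N)
  rw [fnorm_neg] at this
  simpa [sub_eq_add_neg] using this

lemma sum_smul_mat (A : Fin m → Matrix (Fin n) (Fin n) ℝ) (c : Fin m → ℝ)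
    (X : Matrix (Fin n) (Fin r) ℝ) :
    ∑ i, c i • ((A i + (A i)ᵀ) * X)
      = ((∑ i, c i • A i) + (∑ i, c i • A i)ᵀ) * X := by
  rw [Matrix.add_mul, Matrix.sum_mul, Matrix.transpose_sum, Matrix.sum_mul,
    ← Finset.sum_add_distrib]
  refine Finset.sum_congr rfl fun i _ => ?_
  rw [Matrix.transpose_smul, Matrix.smul_mul, Matrix.smul_mul, Matrix.add_mul, smul_add]

lemma finner_matS (v : Fin (n * n) → ℝ) (U : Matrix (Fin n) (Fin r) ℝ) :
    finner U (matS v * U) = finner (matN v) (U * Uᵀ) := by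
  have key : ∀ (vv : Fin n → Fin n → ℝ),
      (∑ a, ∑ c, U a c * ∑ b, vv a b * U b c)
        = ∑ a, ∑ b, vv a b * ∑ c, U a c * U b c := by
    intro vv
    refine Finset.sum_congr rfl fun a _ => ?_
    calc ∑ c, U a c * ∑ b, vv a b * U b c
        = ∑ c, ∑ b, vv a b * (U a c * U b c) := by
          refine Finset.sum_congr rfl fun c _ => ?_
          rw [Finset.mul_sum]
          exact Finset.sum_congr rfl fun b _ => by ring
      _ = ∑ b, ∑ c, vv a b * (U a c * U b c) := Finset.sum_comm
      _ = ∑ b, vv a b * ∑ c, U a c * U b c :=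
          Finset.sum_congr rfl fun b _ => by rw [Finset.mul_sum]
  have hL : finner U (matS v * U)
      = ∑ a, ∑ b, ((1/2 : ℝ) * (v (finProdFinEquiv (a, b)) + v (finProdFinEquiv (b, a))))
          * ∑ c, U a c * U b c := by
    have hmatS : ∀ a b : Fin n, (matS v) a b
        = (1/2 : ℝ) * (v (finProdFinEquiv (a, b)) + v (finProdFinEquiv (b, a))) := by
      intro a b
      simp [matS, Matrix.smul_apply, Matrix.add_apply, Matrix.transpose_apply, Matrix.of_apply]
    have h0 : finner U (matS v * U) = ∑ a, ∑ c, U a c * ∑ b,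
        ((1/2 : ℝ) * (v (finProdFinEquiv (a, b)) + v (finProdFinEquiv (b, a)))) * U b c := by
      simp only [finner, Matrix.mul_apply]
      rfl
    rw [h0, key]
  have hswap : (∑ a, ∑ b, v (finProdFinEquiv (b, a)) * ∑ c, U a c * U b c : ℝ)
      = ∑ a, ∑ b, v (finProdFinEquiv (a, b)) * ∑ c, U a c * U b c := by
    have h1 : (∑ a, ∑ b, v (finProdFinEquiv (b, a)) * ∑ c, U a c * U b c : ℝ)
        = ∑ a, ∑ b, v (finProdFinEquiv (a, b)) * ∑ c, U b c * U a c := Finset.sum_comm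
    rw [h1]
    refine Finset.sum_congr rfl fun a _ => Finset.sum_congr rfl fun b _ => ?_
    congr 1
    exact Finset.sum_congr rfl fun c _ => mul_comm _ _
  have hR : finner (matN v) (U * Uᵀ)
      = ∑ a, ∑ b, v (finProdFinEquiv (a, b)) * ∑ c, U a c * U b c := by
    simp [finner, matN, Matrix.mul_apply, Matrix.transpose_apply]
  rw [hL, hR]
  have hsplit : (∑ a, ∑ b, ((1/2 : ℝ) * (v (finProdFinEquiv (a, b)) + v (finProdFinEquiv (b, a))))
          * ∑ c, U a c * U b c)
      = (1/2 : ℝ) * ((∑ a, ∑ b, v (finProdFinEquiv (a, b)) * ∑ c, U a c * U b c)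
        + ∑ a, ∑ b, v (finProdFinEquiv (b, a)) * ∑ c, U a c * U b c) := by
    rw [mul_add, Finset.mul_sum, Finset.mul_sum, ← Finset.sum_add_distrib]
    refine Finset.sum_congr rfl fun a _ => ?_
    rw [Finset.mul_sum, Finset.mul_sum, ← Finset.sum_add_distrib]
    refine Finset.sum_congr rfl fun b _ => ?_
    ring
  rw [hsplit, hswap]
  ring
lemma dot_self_sq {a b : ℕ} (M : Matrix (Fin a) (Fin b) ℝ) (y : Fin b → ℝ) :
    y ⬝ᵥ (Mᵀ * M).mulVec y = ∑ i, (M.mulVec y i) ^ 2 := by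
  rw [← Matrix.mulVec_mulVec, Matrix.dotProduct_mulVec, Matrix.vecMul_transpose]
  simp [dotProduct, sq]

lemma conjT_eq {k : ℕ} (M : Matrix (Fin k) (Fin k) ℝ) : Mᴴ = Mᵀ := by
  ext i j
  simp [Matrix.conjTranspose_apply]

lemma isHerm_of_transpose {k : ℕ} {M : Matrix (Fin k) (Fin k) ℝ} (h : Mᵀ = M) :
    M.IsHermitian := by
  have : Mᴴ = M := by rw [conjT_eq]; exact h
  exact this

end Ident

end Stmt5


/-- Lemma 1: necessary conditions for approximate second-order
critical points. -/
theorem statement5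
    (n m r rs : ℕ) (hrs : 1 ≤ rs) (hrrs : rs ≤ r)
    (A : Fin m → Matrix (Fin n) (Fin n) ℝ)
    (Mstar : Matrix (Fin n) (Fin n) ℝ) (hM : Mstar.PosSemidef) (hrank : Mstar.rank = rs)
    (w : Fin m → ℝ)
    (κ : ℝ) (hκ : 0 ≤ κ)
    (Xhat : Matrix (Fin n) (Fin r) ℝ)
    (hgrad : fnorm (gradf r A Mstar w Xhat) ≤ κ * specNorm Xhat)
    (hhess : ∀ U : Matrix (Fin n) (Fin r) ℝ,
      -(κ * fnorm U ^ 2) ≤ hessQF r A Mstar w Xhat U) :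
    enormE (Matrix.mulVec (bigX Xhat)ᵀ
        (Matrix.mulVec ((bigA A)ᵀ * bigA A) (vecSq (Xhat * Xhatᵀ - Mstar)))) ≤
      (2 * enormE (Matrix.mulVec (bigA A)ᵀ w) + κ) * specNorm Xhat ∧
    Matrix.PosSemidef
      ((2 : ℝ) • kronIdR r (matS (Matrix.mulVec ((bigA A)ᵀ * bigA A)
          (vecSq (Xhat * Xhatᵀ - Mstar)))) +
        (bigX Xhat)ᵀ * ((bigA A)ᵀ * bigA A) * bigX Xhat +
        (2 * enormE (Matrix.mulVec (bigA A)ᵀ w) + κ) •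
          (1 : Matrix (Fin (n * r)) (Fin (n * r)) ℝ)) := by
  classical
  have hr : 0 < r := by omega
  set Em : Matrix (Fin n) (Fin n) ℝ := Xhat * Xhatᵀ - Mstar with hEm
  set ρ : Fin m → ℝ := Stmt5.rho A Mstar w Xhat with hρ
  have hAe : (bigA A).mulVec (vecSq Em) = fun i => ρ i - w i := by
    rw [Stmt5.bigA_mulVec]
    funext i
    have h1 : calA A Em i = finner (A i) (Xhat * Xhatᵀ) - finner (A i) Mstar := by
      rw [hEm]
      exact Stmt5.finner_sub _ _ _
    rw [h1, hρ, Stmt5.rho]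
    ring
  have hHe : ((bigA A)ᵀ * bigA A).mulVec (vecSq Em) = vecSq (∑ i, (ρ i - w i) • A i) := by
    rw [← Matrix.mulVec_mulVec, hAe, Stmt5.bigAT_mulVec]
  set S : Matrix (Fin n) (Fin n) ℝ := ∑ i, (ρ i - w i) • A i with hS
  set W : Matrix (Fin n) (Fin n) ℝ := ∑ i, w i • A i with hW
  set S' : Matrix (Fin n) (Fin n) ℝ := ∑ i, ρ i • A i with hS'
  have hWv : enormE ((bigA A)ᵀ.mulVec w) = fnorm W := by
    rw [Stmt5.bigAT_mulVec, Stmt5.enorm_vecSq]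
  have hsp0 : 0 ≤ specNorm Xhat := Stmt5.specNorm_nonneg _
  have hfW0 : 0 ≤ fnorm W := Stmt5.fnorm_nonneg _
  have hgradM : gradf r A Mstar w Xhat = (S' + S'ᵀ) * Xhat := by
    rw [Stmt5.gradf_eq, Stmt5.gradMat, hS']
    exact Stmt5.sum_smul_mat A ρ Xhat
  have hSsub : S = S' - W := by
    rw [hS, hS', hW, ← Finset.sum_sub_distrib]
    exact Finset.sum_congr rfl fun i _ => by rw [sub_smul]
  constructor
  · -- part (i)
    rw [hHe, Stmt5.bigXT_mulVec, Stmt5.matN_vecSq, Stmt5.enorm_vecR, hWv]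
    have hdecomp : (S + Sᵀ) * Xhat = (S' + S'ᵀ) * Xhat - (W + Wᵀ) * Xhat := by
      rw [hSsub, Matrix.transpose_sub, ← Matrix.sub_mul]
      congr 1
      abel
    rw [hdecomp]
    have t1 := Stmt5.fnorm_sub_le ((S' + S'ᵀ) * Xhat) ((W + Wᵀ) * Xhat)
    have t2 : fnorm ((S' + S'ᵀ) * Xhat) ≤ κ * specNorm Xhat := by
      rw [← hgradM]; exact hgrad
    have t3 : fnorm ((W + Wᵀ) * Xhat) ≤ fnorm (W + Wᵀ) * specNorm Xhat :=
      Stmt5.fnorm_mul_specNorm_le hr _ _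
    have t4 : fnorm (W + Wᵀ) ≤ 2 * fnorm W := by
      have := Stmt5.fnorm_add_le W Wᵀ
      rw [Stmt5.fnorm_transpose] at this
      linarith
    have t5 : fnorm (W + Wᵀ) * specNorm Xhat ≤ 2 * fnorm W * specNorm Xhat :=
      mul_le_mul_of_nonneg_right t4 hsp0
    nlinarith
  · -- part (ii)
    rw [hHe]
    refine Matrix.posSemidef_iff_dotProduct_mulVec.mpr ⟨?_, ?_⟩
    · -- Hermitian
      apply Stmt5.isHerm_of_transpose
      rw [Matrix.transpose_add, Matrix.transpose_add, Matrix.transpose_smul,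
        Matrix.transpose_smul, Matrix.transpose_one]
      have hGsymm : ∀ a b : Fin n, matS (vecSq S) a b = matS (vecSq S) b a := by
        intro a b
        simp only [matS, Matrix.smul_apply, Matrix.add_apply, Matrix.transpose_apply,
          Matrix.of_apply, smul_eq_mul]
        ring
      have hKT : (kronIdR r (matS (vecSq S)))ᵀ = kronIdR r (matS (vecSq S)) := by
        ext k l
        simp only [Matrix.transpose_apply, kronIdR, Matrix.of_apply]
        by_cases h : (finProdFinEquiv.symm k).2 = (finProdFinEquiv.symm l).2
        · rw [if_pos h.symm, if_pos h]
          exact hGsymm _ _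
        · rw [if_neg (fun hh => h hh.symm), if_neg h]
      have hBT : ((bigX Xhat)ᵀ * ((bigA A)ᵀ * bigA A) * bigX Xhat)ᵀ
          = (bigX Xhat)ᵀ * ((bigA A)ᵀ * bigA A) * bigX Xhat := by
        simp [Matrix.transpose_mul, Matrix.mul_assoc]
      rw [hKT, hBT]
    · -- quadratic form
      intro y
      have hsy : star y = y := by
        funext k
        simp
      rw [hsy]
      set U : Matrix (Fin n) (Fin r) ℝ := Stmt5.matR y with hU
      have hyU : vecR U = y := Stmt5.vecR_matR y
      rw [Matrix.add_mulVec, Matrix.add_mulVec, dotProduct_add, dotProduct_add]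
      have piece1 : y ⬝ᵥ ((2 : ℝ) • kronIdR r (matS (vecSq S))).mulVec y
          = 2 * ∑ i, (ρ i - w i) * finner (A i) (U * Uᵀ) := by
        rw [Matrix.smul_mulVec, dotProduct_smul, ← hyU, Stmt5.kron_mulVec,
          Stmt5.dotR, Stmt5.finner_matS, Stmt5.matN_vecSq, hS, Stmt5.finner_sum_smul]
        simp
      have piece2 : y ⬝ᵥ ((bigX Xhat)ᵀ * ((bigA A)ᵀ * bigA A) * bigX Xhat).mulVec y
          = ∑ i, finner (A i) (Xhat * Uᵀ + U * Xhatᵀ) ^ 2 := by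
        have hB : (bigX Xhat)ᵀ * ((bigA A)ᵀ * bigA A) * bigX Xhat
            = (bigA A * bigX Xhat)ᵀ * (bigA A * bigX Xhat) := by
          simp [Matrix.transpose_mul, Matrix.mul_assoc]
        rw [hB, Stmt5.dot_self_sq]
        refine Finset.sum_congr rfl fun i _ => ?_
        congr 1
        rw [← hyU, ← Matrix.mulVec_mulVec, Stmt5.bigX_mulVec, Stmt5.bigA_mulVec]
        rfl
      have piece3 : y ⬝ᵥ ((2 * enormE ((bigA A)ᵀ.mulVec w) + κ) •
            (1 : Matrix (Fin (n * r)) (Fin (n * r)) ℝ)).mulVec y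
          = (2 * fnorm W + κ) * fnorm U ^ 2 := by
        rw [Matrix.smul_mulVec, Matrix.one_mulVec, dotProduct_smul, hWv]
        have hyy : y ⬝ᵥ y = fnorm U ^ 2 := by
          have h1 : y ⬝ᵥ y = ∑ k, y k ^ 2 := by
            simp [dotProduct, sq]
          rw [h1, Stmt5.sq_sum_vecR, ← hU]
        rw [hyy]
        simp
      rw [piece1, piece2, piece3]
      have hhessU := hhess U
      rw [Stmt5.hess_formula] at hhessU
      have hwb : |∑ i, w i * finner (A i) (U * Uᵀ)| ≤ fnorm W * fnorm U ^ 2 := by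
        have h1 : (∑ i, w i * finner (A i) (U * Uᵀ)) = finner W (U * Uᵀ) := by
          rw [hW, Stmt5.finner_sum_smul]
        rw [h1]
        calc |finner W (U * Uᵀ)| ≤ fnorm W * fnorm (U * Uᵀ) := Stmt5.abs_finner_le _ _
          _ ≤ fnorm W * fnorm U ^ 2 :=
            mul_le_mul_of_nonneg_left (Stmt5.fnorm_mul_transpose_self_le U) hfW0
      have hsub : (∑ i, (ρ i - w i) * finner (A i) (U * Uᵀ))
          = (∑ i, ρ i * finner (A i) (U * Uᵀ)) - ∑ i, w i * finner (A i) (U * Uᵀ) := by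
        rw [← Finset.sum_sub_distrib]
        exact Finset.sum_congr rfl fun i _ => by ring
      have habs := abs_le.mp hwb
      rw [hsub]
      linarith [hhessU, habs.1, habs.2]
end
end

section
/- (Key intermediate inequality in the proof of Lemma 2.) Let ε > 0, κ ≥ 0, δ ∈ [0,1). Assume 𝒜 satisfies the (δ, r+r*)-RIP property, and let X̂ ∈ ℝ^{n×r} satisfy: (i) σ_r(X̂) ≤ √((ε+κ/2)/(1+δ)), (ii) ‖𝐗̂ᵀ𝐇e‖ ≤ (2ε+κ)‖X̂‖₂, and (iii) 2·I_r ⊗ mat_S(𝐇e) + 𝐗̂ᵀ𝐇𝐗̂ ⪰ −(2ε+κ)·I_{nr}. Then (1−δ)·‖X̂X̂ᵀ − M*‖_F² ≤ (ε + κ/2)·‖X̂‖_F² + (3ε + 3κ/2)·tr(M*). -/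
open scoped BigOperators
open Matrix

noncomputable section

section Aux

lemma sum_fin_mul {a b : ℕ} (F : Fin (a * b) → ℝ) :
    ∑ k, F k = ∑ i : Fin a, ∑ j : Fin b, F (finProdFinEquiv (i, j)) := by
  rw [← Equiv.sum_comp (finProdFinEquiv : Fin a × Fin b ≃ Fin (a * b)) F,
    Fintype.sum_prod_type]

@[simp] lemma vecR_apply {n r : ℕ} (M : Matrix (Fin n) (Fin r) ℝ) (i : Fin n) (j : Fin r) :
    vecR M (finProdFinEquiv (i, j)) = M i j := by
  simp [vecR]

@[simp] lemma vecSq_apply {n : ℕ} (M : Matrix (Fin n) (Fin n) ℝ) (i j : Fin n) :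
    vecSq M (finProdFinEquiv (i, j)) = M i j := by
  simp [vecSq]

lemma enorm_sq {k : ℕ} (v : Fin k → ℝ) : enormE v ^ 2 = ∑ i, v i ^ 2 :=
  Real.sq_sqrt (Finset.sum_nonneg fun _ _ => sq_nonneg _)

lemma enorm_nonneg' {k : ℕ} (v : Fin k → ℝ) : 0 ≤ enormE v := Real.sqrt_nonneg _

lemma fnorm_sq {a b : ℕ} (M : Matrix (Fin a) (Fin b) ℝ) :
    fnorm M ^ 2 = ∑ i, ∑ j, M i j ^ 2 :=
  Real.sq_sqrt (Finset.sum_nonneg fun _ _ => Finset.sum_nonneg fun _ _ => sq_nonneg _)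

lemma fnorm_nonneg' {a b : ℕ} (M : Matrix (Fin a) (Fin b) ℝ) : 0 ≤ fnorm M :=
  Real.sqrt_nonneg _

lemma dot_self_eq_enorm_sq {k : ℕ} (v : Fin k → ℝ) :
    v ⬝ᵥ v = enormE v ^ 2 := by
  rw [enorm_sq]; simp [dotProduct, sq]

lemma vecR_dot {n r : ℕ} (M N : Matrix (Fin n) (Fin r) ℝ) :
    vecR M ⬝ᵥ vecR N = finner M N := by
  rw [dotProduct, sum_fin_mul (fun k => vecR M k * vecR N k)]
  simp [finner]

lemma vecSq_dot {n : ℕ} (M N : Matrix (Fin n) (Fin n) ℝ) :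
    vecSq M ⬝ᵥ vecSq N = finner M N := by
  rw [dotProduct, sum_fin_mul (fun k => vecSq M k * vecSq N k)]
  simp [finner]

lemma enorm_vecR {n r : ℕ} (M : Matrix (Fin n) (Fin r) ℝ) :
    enormE (vecR M) = fnorm M := by
  rw [enormE, fnorm, sum_fin_mul (fun k => vecR M k ^ 2)]
  simp

lemma bigA_mulVec {n m : ℕ} (A : Fin m → Matrix (Fin n) (Fin n) ℝ)
    (M : Matrix (Fin n) (Fin n) ℝ) :
    bigA A *ᵥ vecSq M = calA A M := by
  funext i
  show vecSq (A i) ⬝ᵥ vecSq M = _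
  rw [vecSq_dot]; rfl

lemma matS_apply {n : ℕ} (v : Fin (n * n) → ℝ) (i j : Fin n) :
    matS v i j = (1 / 2) * (v (finProdFinEquiv (i, j)) + v (finProdFinEquiv (j, i))) := by
  simp [matS, Matrix.smul_apply, Matrix.add_apply, Matrix.transpose_apply]

end Aux
section Aux2

lemma bigX_mulVec {n r : ℕ} (X U : Matrix (Fin n) (Fin r) ℝ) :
    bigX X *ᵥ vecR U = vecSq (X * Uᵀ + U * Xᵀ) := by
  funext k
  obtain ⟨⟨i, j⟩, rfl⟩ := finProdFinEquiv.surjective k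
  show (∑ l, bigX X (finProdFinEquiv (i,j)) l * vecR U l) = _
  rw [sum_fin_mul (fun l => bigX X (finProdFinEquiv (i,j)) l * vecR U l)]
  simp only [bigX, Matrix.of_apply, Equiv.symm_apply_apply, vecR_apply, vecSq_apply,
    Matrix.add_apply, Matrix.mul_apply, Matrix.transpose_apply, add_mul, ite_mul, zero_mul,
    Finset.sum_add_distrib]
  congr 1
  · rw [Finset.sum_comm]
    simp [Finset.sum_ite_eq, mul_comm]
  · rw [Finset.sum_comm]
    simp [Finset.sum_ite_eq, mul_comm]

lemma kronIdR_mulVec {n r : ℕ} (G : Matrix (Fin n) (Fin n) ℝ) (U : Matrix (Fin n) (Fin r) ℝ) :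
    kronIdR r G *ᵥ vecR U = vecR (G * U) := by
  funext k
  obtain ⟨⟨i, j⟩, rfl⟩ := finProdFinEquiv.surjective k
  show (∑ l, kronIdR r G (finProdFinEquiv (i,j)) l * vecR U l) = _
  rw [sum_fin_mul (fun l => kronIdR r G (finProdFinEquiv (i,j)) l * vecR U l)]
  simp only [kronIdR, Matrix.of_apply, Equiv.symm_apply_apply, vecR_apply, vecR_apply,
    Matrix.mul_apply, ite_mul, zero_mul]
  rw [Finset.sum_comm]
  simp [Finset.sum_ite_eq]

lemma bigX_transpose_mulVec {n r : ℕ} (X : Matrix (Fin n) (Fin r) ℝ) (w : Fin (n * n) → ℝ) :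
    (bigX X)ᵀ *ᵥ w = vecR ((2 : ℝ) • (matS w * X)) := by
  funext l
  obtain ⟨⟨i, j⟩, rfl⟩ := finProdFinEquiv.surjective l
  show (∑ k, bigX X k (finProdFinEquiv (i,j)) * w k) = _
  rw [sum_fin_mul (fun k => bigX X k (finProdFinEquiv (i,j)) * w k)]
  simp only [bigX, Matrix.of_apply, Equiv.symm_apply_apply, vecR_apply, Matrix.smul_apply,
    Matrix.mul_apply, matS_apply, add_mul, ite_mul, zero_mul, Finset.sum_add_distrib,
    smul_eq_mul]
  rw [show (∑ a : Fin n, ∑ b : Fin n, if b = i then X a j * w (finProdFinEquiv (a, b)) else 0)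
      = ∑ a : Fin n, X a j * w (finProdFinEquiv (a, i)) from by simp [Finset.sum_ite_eq],
    show (∑ a : Fin n, ∑ b : Fin n, if a = i then X b j * w (finProdFinEquiv (a, b)) else 0)
      = ∑ b : Fin n, X b j * w (finProdFinEquiv (i, b)) from by
        rw [Finset.sum_comm]; simp [Finset.sum_ite_eq]]
  rw [← Finset.sum_add_distrib, Finset.mul_sum]
  congr 1; funext a; ring

end Aux2
section Aux3
open Matrix

lemma AtA_quad {n m : ℕ} (A : Fin m → Matrix (Fin n) (Fin n) ℝ)
    (v w : Fin (n * n) → ℝ) :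
    (((bigA A)ᵀ * bigA A) *ᵥ v) ⬝ᵥ w = (bigA A *ᵥ v) ⬝ᵥ (bigA A *ᵥ w) := by
  rw [← Matrix.mulVec_mulVec, Matrix.mulVec_transpose, ← dotProduct_mulVec]

lemma finner_matS {n : ℕ} (v : Fin (n * n) → ℝ) (E : Matrix (Fin n) (Fin n) ℝ)
    (hE : Eᵀ = E) :
    finner (matS v) E = v ⬝ᵥ vecSq E := by
  have h2 : ∀ i j : Fin n, E j i = E i j := fun i j => by nth_rewrite 1 [← hE]; rfl
  have swap : (∑ i, ∑ j, v (finProdFinEquiv (j, i)) * E i j)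
      = ∑ i, ∑ j, v (finProdFinEquiv (i, j)) * E i j := by
    rw [Finset.sum_comm]
    exact Finset.sum_congr rfl fun i _ => Finset.sum_congr rfl fun j _ => by rw [h2 j i]
  rw [dotProduct, sum_fin_mul (fun k => v k * vecSq E k)]
  simp only [vecSq_apply]
  calc finner (matS v) E
      = ∑ i, ∑ j, ((1/2) * (v (finProdFinEquiv (i, j)) * E i j)
          + (1/2) * (v (finProdFinEquiv (j, i)) * E i j)) := by
        simp only [finner, matS_apply]
        exact Finset.sum_congr rfl fun i _ => Finset.sum_congr rfl fun j _ => by ring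
    _ = (1/2) * (∑ i, ∑ j, v (finProdFinEquiv (i, j)) * E i j)
          + (1/2) * (∑ i, ∑ j, v (finProdFinEquiv (j, i)) * E i j) := by
        simp [Finset.sum_add_distrib, Finset.mul_sum]
    _ = ∑ i, ∑ j, v (finProdFinEquiv (i, j)) * E i j := by rw [swap]; ring

lemma finner_sub {a b : ℕ} (G P Q : Matrix (Fin a) (Fin b) ℝ) :
    finner G (P - Q) = finner G P - finner G Q := by
  simp [finner, mul_sub, Finset.sum_sub_distrib]

lemma finner_mul_right {n r : ℕ} (G : Matrix (Fin n) (Fin n) ℝ) (X : Matrix (Fin n) (Fin r) ℝ) :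
    finner G (X * Xᵀ) = finner (G * X) X := by
  simp only [finner, Matrix.mul_apply, Matrix.transpose_apply, Finset.mul_sum, Finset.sum_mul]
  refine Finset.sum_congr rfl fun i _ => ?_
  rw [Finset.sum_comm]
  exact Finset.sum_congr rfl fun c _ => Finset.sum_congr rfl fun j _ => by ring

lemma finner_le_fnorm_mul_fnorm {a b : ℕ} (P Q : Matrix (Fin a) (Fin b) ℝ) :
    finner P Q ≤ fnorm P * fnorm Q := by
  have key : finner P Q ^ 2 ≤ (fnorm P * fnorm Q) ^ 2 := by
    rw [mul_pow, fnorm_sq, fnorm_sq]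
    have := Finset.sum_mul_sq_le_sq_mul_sq Finset.univ
      (fun p : Fin a × Fin b => P p.1 p.2) (fun p : Fin a × Fin b => Q p.1 p.2)
    simpa [finner, Fintype.sum_prod_type] using this
  calc finner P Q ≤ |finner P Q| := le_abs_self _
    _ = Real.sqrt (finner P Q ^ 2) := (Real.sqrt_sq_eq_abs _).symm
    _ ≤ Real.sqrt ((fnorm P * fnorm Q) ^ 2) := Real.sqrt_le_sqrt key
    _ = fnorm P * fnorm Q :=
        Real.sqrt_sq (mul_nonneg (fnorm_nonneg' P) (fnorm_nonneg' Q))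

end Aux3
section Aux4
open Matrix

lemma rank_sub_le {k : ℕ} (P Q : Matrix (Fin k) (Fin k) ℝ) :
    (P - Q).rank ≤ P.rank + Q.rank := by
  classical
  have hrange : LinearMap.range (P - Q).mulVecLin ≤
      LinearMap.range P.mulVecLin ⊔ LinearMap.range Q.mulVecLin := by
    rintro x ⟨y, rfl⟩
    have : (P - Q).mulVecLin y = P.mulVecLin y - Q.mulVecLin y := by
      simp [Matrix.mulVecLin_apply, Matrix.sub_mulVec]
    rw [this]
    exact Submodule.sub_mem _ (Submodule.mem_sup_left ⟨y, rfl⟩)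
      (Submodule.mem_sup_right ⟨y, rfl⟩)
  calc (P - Q).rank ≤ Module.finrank ℝ
        ↥(LinearMap.range P.mulVecLin ⊔ LinearMap.range Q.mulVecLin) :=
        Submodule.finrank_mono hrange
    _ ≤ P.rank + Q.rank := Submodule.finrank_add_le_finrank_add_finrank _ _

lemma rank_vecMulVec_le {a b : ℕ} (u : Fin a → ℝ) (v : Fin b → ℝ) :
    (Matrix.vecMulVec u v).rank ≤ 1 := by
  rw [Matrix.vecMulVec_eq (Fin 1)]
  calc (Matrix.replicateCol (Fin 1) u * Matrix.replicateRow (Fin 1) v).rank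
      ≤ (Matrix.replicateRow (Fin 1) v).rank := Matrix.rank_mul_le_right _ _
    _ ≤ Fintype.card (Fin 1) := Matrix.rank_le_card_height _
    _ = 1 := by simp

lemma isHermitian_tmul {a b : ℕ} (X : Matrix (Fin a) (Fin b) ℝ) :
    (Xᵀ * X).IsHermitian := by
  have := Matrix.isHermitian_conjTranspose_mul_self X
  rwa [Matrix.conjTranspose_eq_transpose_of_trivial] at this

lemma eigval_spec {k : ℕ} {M : Matrix (Fin k) (Fin k) ℝ} (h : M.IsHermitian) (i : Fin k) :
    ∃ j, eigval M i = h.eigenvalues j := by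
  rw [eigval, dif_pos h]
  exact ⟨_, rfl⟩

lemma exists_unit_eigvec {b : ℕ} {M : Matrix (Fin b) (Fin b) ℝ} (h : M.IsHermitian)
    (i : Fin b) :
    ∃ u : Fin b → ℝ, (∑ j, u j ^ 2) = 1 ∧ M *ᵥ u = eigval M i • u := by
  obtain ⟨j, hj⟩ := eigval_spec h i
  refine ⟨h.eigenvectorBasis j, ?_, by rw [hj]; exact h.mulVec_eigenvectorBasis j⟩
  have h1 : ‖h.eigenvectorBasis j‖ = 1 := h.eigenvectorBasis.orthonormal.1 j
  have h2 := congrArg (· ^ 2) h1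
  rw [EuclideanSpace.norm_eq] at h2
  simp only [Real.norm_eq_abs, sq_abs] at h2
  rw [Real.sq_sqrt (Finset.sum_nonneg fun _ _ => sq_nonneg _)] at h2
  simpa using h2

lemma mulVec_dot_eq {a b : ℕ} (X : Matrix (Fin a) (Fin b) ℝ) (u : Fin b → ℝ) :
    (X *ᵥ u) ⬝ᵥ (X *ᵥ u) = ((Xᵀ * X) *ᵥ u) ⬝ᵥ u := by
  rw [← Matrix.mulVec_mulVec, Matrix.mulVec_transpose, ← dotProduct_mulVec,
    dotProduct_comm]

lemma eigval_tmul_nonneg_le {a b : ℕ} (X : Matrix (Fin a) (Fin b) ℝ) (i : Fin b) :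
    0 ≤ eigval (Xᵀ * X) i ∧ eigval (Xᵀ * X) i ≤ fnorm X ^ 2 := by
  obtain ⟨u, hu1, hu2⟩ := exists_unit_eigvec (isHermitian_tmul X) i
  have hudot : u ⬝ᵥ u = 1 := by rw [dotProduct]; simpa [sq] using hu1
  have key : eigval (Xᵀ * X) i = (X *ᵥ u) ⬝ᵥ (X *ᵥ u) := by
    rw [mulVec_dot_eq, hu2, smul_dotProduct, hudot, smul_eq_mul, mul_one]
  constructor
  · rw [key]; exact Finset.sum_nonneg fun ii _ => mul_self_nonneg _
  · rw [key]
    have hCS : ∀ ii : Fin a, (X *ᵥ u) ii * (X *ᵥ u) ii ≤ (∑ j, X ii j ^ 2) * (∑ j, u j ^ 2) := by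
      intro ii
      have := Finset.sum_mul_sq_le_sq_mul_sq Finset.univ (fun j => X ii j) u
      calc (X *ᵥ u) ii * (X *ᵥ u) ii = (∑ j, X ii j * u j) ^ 2 := by
            simp [Matrix.mulVec, dotProduct, sq]
        _ ≤ _ := this
    calc (X *ᵥ u) ⬝ᵥ (X *ᵥ u) = ∑ ii, (X *ᵥ u) ii * (X *ᵥ u) ii := rfl
      _ ≤ ∑ ii, (∑ j, X ii j ^ 2) * (∑ j, u j ^ 2) := Finset.sum_le_sum fun ii _ => hCS ii
      _ = fnorm X ^ 2 := by rw [fnorm_sq]; simp [hu1]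

lemma specNorm_le_fnorm {a b : ℕ} (X : Matrix (Fin a) (Fin b) ℝ) :
    specNorm X ≤ fnorm X := by
  rw [specNorm]
  split_ifs with hb
  · calc Real.sqrt (eigval (Xᵀ * X) ⟨0, hb⟩) ≤ Real.sqrt (fnorm X ^ 2) :=
        Real.sqrt_le_sqrt (eigval_tmul_nonneg_le X _).2
      _ = fnorm X := Real.sqrt_sq (fnorm_nonneg' X)
  · exact fnorm_nonneg' X

open scoped MatrixOrder in
lemma finner_psd_nonneg {k : ℕ} {P Q : Matrix (Fin k) (Fin k) ℝ}
    (hP : P.PosSemidef) (hQ : Q.PosSemidef) : 0 ≤ finner P Q := by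
  obtain ⟨B, hB⟩ := CStarAlgebra.nonneg_iff_eq_star_mul_self.mp hQ.nonneg
  rw [Matrix.star_eq_conjTranspose] at hB
  have hPt : Pᵀ = P := by
    have := hP.1
    rwa [Matrix.IsHermitian, Matrix.conjTranspose_eq_transpose_of_trivial] at this
  have htr : finner P Q = Matrix.trace (B * P * Bᴴ) := by
    have : finner P Q = Matrix.trace (Pᵀ * Q) := by
      simp only [Matrix.trace, Matrix.diag, Matrix.mul_apply, Matrix.transpose_apply, finner]
      rw [Finset.sum_comm]
    rw [this, hPt, hB, ← Matrix.mul_assoc, Matrix.trace_mul_comm, ← Matrix.mul_assoc]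
  rw [htr]
  have hpsd := hP.mul_mul_conjTranspose_same B
  calc (0:ℝ) ≤ ∑ i, (B * P * Bᴴ) i i := Finset.sum_nonneg fun i _ => by
        have := hpsd.dotProduct_mulVec_nonneg (Pi.single i 1)
        simpa [dotProduct_single, Matrix.mulVec_single] using this
    _ = Matrix.trace (B * P * Bᴴ) := rfl

end Aux4
section Aux5
open Matrix

lemma fnorm_two_smul {a b : ℕ} (M : Matrix (Fin a) (Fin b) ℝ) :
    fnorm ((2:ℝ) • M) = 2 * fnorm M := by
  rw [fnorm, fnorm, show (∑ i, ∑ j, ((2:ℝ) • M) i j ^ 2) = 4 * ∑ i, ∑ j, M i j ^ 2 from by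
    simp [Matrix.smul_apply, smul_eq_mul, mul_pow, Finset.mul_sum]; norm_num]
  rw [show (4:ℝ) = 2^2 by norm_num, Real.sqrt_mul (by positivity) _, Real.sqrt_sq (by norm_num)]

lemma specNorm_nonneg {a b : ℕ} (X : Matrix (Fin a) (Fin b) ℝ) : 0 ≤ specNorm X := by
  rw [specNorm]; split_ifs
  · exact Real.sqrt_nonneg _
  · exact le_refl 0

lemma matS_transpose {n : ℕ} (v : Fin (n * n) → ℝ) : (matS v)ᵀ = matS v := by
  ext i j
  rw [Matrix.transpose_apply, matS_apply, matS_apply]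
  ring

lemma vecMulVec_transpose' {a b : ℕ} (z : Fin a → ℝ) (u : Fin b → ℝ) :
    (Matrix.vecMulVec z u)ᵀ = Matrix.vecMulVec u z := by
  ext i j
  simp [Matrix.vecMulVec_apply, mul_comm]

lemma rank_add_le' {a b : ℕ} (P Q : Matrix (Fin a) (Fin b) ℝ) :
    (P + Q).rank ≤ P.rank + Q.rank := by
  classical
  have hrange : LinearMap.range (P + Q).mulVecLin ≤
      LinearMap.range P.mulVecLin ⊔ LinearMap.range Q.mulVecLin := by
    rintro x ⟨y, rfl⟩
    have : (P + Q).mulVecLin y = P.mulVecLin y + Q.mulVecLin y := by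
      simp [Matrix.mulVecLin_apply, Matrix.add_mulVec]
    rw [this]
    exact Submodule.add_mem _ (Submodule.mem_sup_left ⟨y, rfl⟩)
      (Submodule.mem_sup_right ⟨y, rfl⟩)
  calc (P + Q).rank ≤ Module.finrank ℝ
        ↥(LinearMap.range P.mulVecLin ⊔ LinearMap.range Q.mulVecLin) :=
        Submodule.finrank_mono hrange
    _ ≤ P.rank + Q.rank := Submodule.finrank_add_le_finrank_add_finrank _ _

lemma soc_psd {n m r : ℕ} (hr : 0 < r) (A : Fin m → Matrix (Fin n) (Fin n) ℝ)
    (ε κ δ : ℝ) (hε : 0 < ε) (hκ : 0 ≤ κ) (hδ0 : 0 ≤ δ)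
    (X : Matrix (Fin n) (Fin r) ℝ) (G : Matrix (Fin n) (Fin n) ℝ) (hGsym : Gᵀ = G)
    (hσ : sigmaMin X ≤ Real.sqrt ((ε + κ / 2) / (1 + δ)))
    (hRIPu : ∀ W : Matrix (Fin n) (Fin n) ℝ, W.rank ≤ 2 →
      enormE (calA A W) ^ 2 ≤ (1 + δ) * fnorm W ^ 2)
    (hsoc' : ∀ U : Matrix (Fin n) (Fin r) ℝ,
      0 ≤ 2 * finner U (G * U) + enormE (calA A (X * Uᵀ + U * Xᵀ)) ^ 2
        + (2 * ε + κ) * finner U U) :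
    (G + (3 * ε + 3 * κ / 2) • (1 : Matrix (Fin n) (Fin n) ℝ)).PosSemidef := by
  -- eigen data for smallest singular value
  have hq0 : (0:ℝ) ≤ (ε + κ / 2) / (1 + δ) := by positivity
  rw [sigmaMin, dif_pos hr] at hσ
  set lam : ℝ := eigval (Xᵀ * X) ⟨r - 1, by omega⟩ with hlam
  have hlam0 : 0 ≤ lam := (eigval_tmul_nonneg_le X _).1
  have hlamle : lam ≤ (ε + κ / 2) / (1 + δ) := by
    have h2 := pow_le_pow_left₀ (Real.sqrt_nonneg _) hσ 2
    rwa [Real.sq_sqrt hlam0, Real.sq_sqrt hq0] at h2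
  have hlamd : (1 + δ) * lam ≤ ε + κ / 2 := by
    rw [le_div_iff₀ (by linarith)] at hlamle
    rw [mul_comm]; exact hlamle
  obtain ⟨u, hu1, hu2⟩ := exists_unit_eigvec (isHermitian_tmul X) ⟨r - 1, by omega⟩
  set a := X *ᵥ u with ha
  have hSa : a ⬝ᵥ a = lam := by
    rw [ha, mulVec_dot_eq, hu2, smul_dotProduct, smul_eq_mul]
    rw [show u ⬝ᵥ u = 1 from by rw [dotProduct]; simpa [sq] using hu1, mul_one]
  refine Matrix.PosSemidef.of_dotProduct_mulVec_nonneg ?_ ?_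
  · rw [Matrix.IsHermitian, Matrix.conjTranspose_eq_transpose_of_trivial,
      Matrix.transpose_add, hGsym, Matrix.transpose_smul, Matrix.transpose_one]
  intro z
  rw [star_trivial, Matrix.add_mulVec, dotProduct_add, Matrix.smul_mulVec,
    Matrix.one_mulVec, dotProduct_smul, smul_eq_mul]
  set U := Matrix.vecMulVec z u with hU
  set Sz := z ⬝ᵥ z with hSz
  have hSz0 : 0 ≤ Sz := Finset.sum_nonneg fun i _ => mul_self_nonneg _
  have hsum : ∀ i : Fin n, (∑ j, (z i * u j) * (z i * u j)) = z i * z i := fun i => by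
    calc (∑ j, (z i * u j) * (z i * u j)) = ∑ j, (z i * z i) * u j ^ 2 :=
        Finset.sum_congr rfl fun j _ => by ring
      _ = z i * z i := by rw [← Finset.mul_sum, hu1, mul_one]
  have hUU : finner U U = Sz := by
    simp only [finner, hU, Matrix.vecMulVec_apply]
    rw [Finset.sum_congr rfl fun i _ => hsum i]; rfl
  have hp : ∀ (i : Fin n) (j : Fin r), (∑ p, G i p * (z p * u j)) = (∑ p, G i p * z p) * u j :=
    fun i j => by rw [Finset.sum_mul]; exact Finset.sum_congr rfl fun p _ => by ring
  have hGU : finner U (G * U) = z ⬝ᵥ (G *ᵥ z) := by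
    have hi : ∀ i : Fin n, (∑ j, U i j * (G * U) i j) = z i * (∑ p, G i p * z p) := by
      intro i
      have hj : ∀ j : Fin r, U i j * (G * U) i j = (z i * (∑ p, G i p * z p)) * u j ^ 2 := by
        intro j
        simp only [hU, Matrix.vecMulVec_apply, Matrix.mul_apply]
        rw [hp i j]; ring
      rw [Finset.sum_congr rfl fun j _ => hj j, ← Finset.mul_sum, hu1, mul_one]
    rw [finner, Finset.sum_congr rfl fun i _ => hi i]; rfl
  -- the rank-2 matrix W
  set W := X * Uᵀ + U * Xᵀ with hW
  have hWentry : ∀ i j, W i j = a i * z j + z i * a j := by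
    intro i j
    simp only [hW, Matrix.add_apply, Matrix.mul_apply, Matrix.transpose_apply, hU,
      Matrix.vecMulVec_apply, ha, Matrix.mulVec, dotProduct]
    rw [Finset.sum_mul, Finset.mul_sum]
    congr 1
    · exact Finset.sum_congr rfl fun q _ => by ring
    · exact Finset.sum_congr rfl fun q _ => by ring
  have hrankW : W.rank ≤ 2 := by
    calc W.rank ≤ (X * Uᵀ).rank + (U * Xᵀ).rank := rank_add_le' _ _
      _ ≤ 1 + 1 := by
        gcongr
        · calc (X * Uᵀ).rank ≤ Uᵀ.rank := Matrix.rank_mul_le_right _ _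
            _ ≤ 1 := by rw [hU, vecMulVec_transpose']; exact _root_.rank_vecMulVec_le _ _
        · calc (U * Xᵀ).rank ≤ U.rank := Matrix.rank_mul_le_left _ _
            _ ≤ 1 := by rw [hU]; exact _root_.rank_vecMulVec_le _ _
      _ = 2 := rfl
  have hfW : fnorm W ^ 2 = 2 * (a ⬝ᵥ a) * Sz + 2 * (a ⬝ᵥ z) ^ 2 := by
    rw [fnorm_sq]
    calc (∑ i, ∑ j, W i j ^ 2)
        = ∑ i, ∑ j, ((a i * a i) * (z j * z j) + (z i * z i) * (a j * a j)
            + 2 * ((a i * z i) * (a j * z j))) := by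
          refine Finset.sum_congr rfl fun i _ => Finset.sum_congr rfl fun j _ => ?_
          rw [hWentry i j]; ring
      _ = (a ⬝ᵥ a) * Sz + Sz * (a ⬝ᵥ a) + 2 * ((a ⬝ᵥ z) * (a ⬝ᵥ z)) := by
          rw [hSz]
          simp only [dotProduct]
          rw [Finset.sum_mul_sum, Finset.sum_mul_sum, Finset.sum_mul_sum, Finset.mul_sum,
            ← Finset.sum_add_distrib, ← Finset.sum_add_distrib]
          refine Finset.sum_congr rfl fun i _ => ?_
          rw [Finset.mul_sum, ← Finset.sum_add_distrib, ← Finset.sum_add_distrib]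
      _ = 2 * (a ⬝ᵥ a) * Sz + 2 * (a ⬝ᵥ z) ^ 2 := by ring
  have hCS : (a ⬝ᵥ z) ^ 2 ≤ (a ⬝ᵥ a) * Sz := by
    have := Finset.sum_mul_sq_le_sq_mul_sq Finset.univ a z
    simpa [dotProduct, sq, hSz] using this
  have hRIPW := hRIPu W hrankW
  have hEcal : enormE (calA A W) ^ 2 ≤ 4 * (ε + κ / 2) * Sz := by
    calc enormE (calA A W) ^ 2 ≤ (1 + δ) * fnorm W ^ 2 := hRIPW
      _ ≤ (1 + δ) * (4 * lam * Sz) := by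
          rw [hfW]
          have h1 : 2 * (a ⬝ᵥ a) * Sz + 2 * (a ⬝ᵥ z) ^ 2 ≤ 4 * lam * Sz := by
            nlinarith [hCS, hSa]
          exact mul_le_mul_of_nonneg_left h1 (by linarith)
      _ ≤ 4 * (ε + κ / 2) * Sz := by nlinarith [hlamd, hSz0]
  have hs := hsoc' U
  rw [hGU, hUU] at hs
  have he0 : 0 ≤ enormE (calA A W) ^ 2 := sq_nonneg _
  nlinarith [hs, hEcal]

end Aux5
/-- key intermediate inequality in the proof of Lemma 2. -/
theorem statement18
    (n m r rs : ℕ) (hrs : 1 ≤ rs) (hrrs : rs ≤ r)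
    (A : Fin m → Matrix (Fin n) (Fin n) ℝ)
    (Mstar : Matrix (Fin n) (Fin n) ℝ) (hM : Mstar.PosSemidef) (hrank : Mstar.rank = rs)
    (ε κ δ : ℝ) (hε : 0 < ε) (hκ : 0 ≤ κ) (hδ0 : 0 ≤ δ) (hδ1 : δ < 1)
    (hRIP : RIP A δ (r + rs))
    (Xhat : Matrix (Fin n) (Fin r) ℝ)
    (hσ : sigmaMin Xhat ≤ Real.sqrt ((ε + κ / 2) / (1 + δ)))
    (hfoc : enormE (Matrix.mulVec (bigX Xhat)ᵀ
        (Matrix.mulVec ((bigA A)ᵀ * bigA A) (vecSq (Xhat * Xhatᵀ - Mstar)))) ≤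
      (2 * ε + κ) * specNorm Xhat)
    (hsoc : Matrix.PosSemidef
      ((2 : ℝ) • kronIdR r (matS (Matrix.mulVec ((bigA A)ᵀ * bigA A)
          (vecSq (Xhat * Xhatᵀ - Mstar)))) +
        (bigX Xhat)ᵀ * ((bigA A)ᵀ * bigA A) * bigX Xhat +
        (2 * ε + κ) • (1 : Matrix (Fin (n * r)) (Fin (n * r)) ℝ))) :
    (1 - δ) * fnorm (Xhat * Xhatᵀ - Mstar) ^ 2 ≤
      (ε + κ / 2) * fnorm Xhat ^ 2 + (3 * ε + 3 * κ / 2) * Matrix.trace Mstar := by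
  have hr : 0 < r := lt_of_lt_of_le hrs hrrs
  set E := Xhat * Xhatᵀ - Mstar with hE
  set H := (bigA A)ᵀ * bigA A with hH
  set hv := H *ᵥ vecSq E with hhv
  set G := matS hv with hG
  have hMt : Mstarᵀ = Mstar := by
    have := hM.1
    rwa [Matrix.IsHermitian, Matrix.conjTranspose_eq_transpose_of_trivial] at this
  have hEt : Eᵀ = E := by
    rw [hE, Matrix.transpose_sub, Matrix.transpose_mul, Matrix.transpose_transpose, hMt]
  -- rank bound
  have hrankE : E.rank ≤ r + rs := by
    calc E.rank ≤ (Xhat * Xhatᵀ).rank + Mstar.rank := rank_sub_le _ _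
      _ ≤ r + rs := by
        rw [hrank]
        have : (Xhat * Xhatᵀ).rank ≤ r :=
          le_trans (Matrix.rank_mul_le_left _ _) (Matrix.rank_le_width Xhat)
        omega
  -- quadratic identity
  have hQ : enormE (calA A E) ^ 2 = hv ⬝ᵥ vecSq E := by
    rw [← bigA_mulVec, ← dot_self_eq_enorm_sq, hhv, hH, AtA_quad]
  have hfg : finner G E = hv ⬝ᵥ vecSq E := finner_matS hv E hEt
  -- FOC consequence
  have hfoc2 : fnorm (G * Xhat) ≤ (ε + κ / 2) * specNorm Xhat := by
    rw [bigX_transpose_mulVec, enorm_vecR] at hfoc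
    rw [show ((2:ℝ) • (matS (H *ᵥ vecSq E) * Xhat)) = (2:ℝ) • (G * Xhat) from rfl,
      fnorm_two_smul] at hfoc
    linarith [hfoc]
  have hXX : finner G (Xhat * Xhatᵀ) ≤ (ε + κ / 2) * fnorm Xhat ^ 2 := by
    rw [finner_mul_right]
    have hc : (0:ℝ) ≤ ε + κ / 2 := by linarith
    calc finner (G * Xhat) Xhat ≤ fnorm (G * Xhat) * fnorm Xhat :=
        finner_le_fnorm_mul_fnorm _ _
      _ ≤ ((ε + κ / 2) * specNorm Xhat) * fnorm Xhat :=
        mul_le_mul_of_nonneg_right hfoc2 (fnorm_nonneg' _)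
      _ ≤ (ε + κ / 2) * fnorm Xhat ^ 2 := by
        rw [sq, ← mul_assoc]
        exact mul_le_mul_of_nonneg_right
          (mul_le_mul_of_nonneg_left (specNorm_le_fnorm Xhat) hc) (fnorm_nonneg' Xhat)
  -- SOC consequence
  have hsoc' : ∀ U : Matrix (Fin n) (Fin r) ℝ,
      0 ≤ 2 * finner U (G * U) + enormE (calA A (Xhat * Uᵀ + U * Xhatᵀ)) ^ 2
        + (2 * ε + κ) * finner U U := by
    intro U
    have hq := hsoc.dotProduct_mulVec_nonneg (vecR U)
    rw [star_trivial, Matrix.add_mulVec, Matrix.add_mulVec, dotProduct_add,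
      dotProduct_add] at hq
    rw [Matrix.smul_mulVec, dotProduct_smul, kronIdR_mulVec, vecR_dot] at hq
    rw [← Matrix.mulVec_mulVec, ← Matrix.mulVec_mulVec, dotProduct_mulVec,
      Matrix.vecMul_transpose, dotProduct_comm, AtA_quad, bigX_mulVec,
      bigA_mulVec, dot_self_eq_enorm_sq] at hq
    rw [Matrix.smul_mulVec, Matrix.one_mulVec, dotProduct_smul, vecR_dot] at hq
    simp only [smul_eq_mul] at hq
    linarith [hq]
  -- PSD of G + c 1
  have hGsym : Gᵀ = G := matS_transpose _
  have hRIPu : ∀ W : Matrix (Fin n) (Fin n) ℝ, W.rank ≤ 2 →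
      enormE (calA A W) ^ 2 ≤ (1 + δ) * fnorm W ^ 2 := by
    intro W hW
    exact (hRIP W (le_trans hW (by omega))).2
  have hGpsd := soc_psd hr A ε κ δ hε hκ hδ0 Xhat G hGsym hσ hRIPu hsoc'
  -- trace bound
  have hGM : -(finner G Mstar) ≤ (3 * ε + 3 * κ / 2) * Matrix.trace Mstar := by
    have h0 := finner_psd_nonneg hGpsd hM
    have hsplit : finner (G + (3 * ε + 3 * κ / 2) • (1 : Matrix (Fin n) (Fin n) ℝ)) Mstar
        = finner G Mstar + (3 * ε + 3 * κ / 2) * Matrix.trace Mstar := by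
      simp only [finner, Matrix.add_apply, Matrix.smul_apply, Matrix.one_apply, smul_eq_mul,
        mul_ite, mul_one, mul_zero, ite_mul, zero_mul, add_mul, Finset.sum_add_distrib,
        Finset.sum_ite_eq, Finset.mem_univ, if_true, Matrix.trace, Matrix.diag, Finset.mul_sum]
    rw [hsplit] at h0
    linarith [h0]
  -- combine
  calc (1 - δ) * fnorm E ^ 2 ≤ enormE (calA A E) ^ 2 := (hRIP E hrankE).1
    _ = finner G E := by rw [hQ, hfg]
    _ = finner G (Xhat * Xhatᵀ) - finner G Mstar := by rw [hE, finner_sub]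
    _ ≤ (ε + κ / 2) * fnorm Xhat ^ 2 + (3 * ε + 3 * κ / 2) * Matrix.trace Mstar := by
      linarith [hXX, hGM]
end
end
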